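/- arXiv:1810.04229 — 11 statements merged into one kernel-verified Lean document; each statement's English description precedes it below -/
import Mathlib

section
/- For each k ≥ 1 and each integer n ≥ 2, if z ∈ ℂ satisfies |z| > 2^n, then |Q_{M_{k-1},M_k}(z)| = |z^(2^(m_k+1)) + c_k| > 2^(n+1). -/
open Complex Metric Set Filter

/-- For each k ≥ 1 and each integer n ≥ 2, if |z| > 2^n, then
|Q_{M_{k-1},M_k}(z)| = |z^(2^(m_k+1)) + c_k| > 2^(n+1). -/
theorem stmt_0
    (c : ℕ → ℂ) (msq : ℕ → ℕ)
    (hc : ∀ k, 1 ≤ k → 4 < ‖c k‖)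
    (hmsq : ∀ k, 1 ≤ k → 1 ≤ msq k)
    (hinv : ∀ k, 1 ≤ k → Real.sqrt (‖c k‖) + 1 < (2 : ℝ) ^ 2 ^ msq k)
    (M : ℕ → ℕ) (hM0 : M 0 = 0)
    (hMs : ∀ k, M (k + 1) = M k + (msq (k + 1) + 1))
    (P : ℕ → ℂ → ℂ)
    (hP1 : ∀ k, 1 ≤ k → ∀ z, P (M k) z = z ^ 2 + c k)
    (hP2 : ∀ n, (∀ k, 1 ≤ k → M k ≠ n) → ∀ z, P n z = z ^ 2)
    (Q : ℕ → ℕ → ℂ → ℂ)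
    (hQ0 : ∀ n z, Q n n z = z)
    (hQs : ∀ a n z, a ≤ n → Q a (n + 1) z = P (n + 1) (Q a n z)) :
    ∀ k, 1 ≤ k → ∀ n : ℕ, 2 ≤ n → ∀ z : ℂ, (2 : ℝ) ^ n < ‖z‖ →
      ‖Q (M (k - 1)) (M k) z‖
          = ‖z ^ 2 ^ (msq k + 1) + c k‖ ∧
        (2 : ℝ) ^ (n + 1) < ‖z ^ 2 ^ (msq k + 1) + c k‖ := by
  have hmono : StrictMono M := strictMono_nat_of_lt_succ (fun k => by rw [hMs]; omega)
  intro k hk n hn z hz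
  obtain ⟨k', rfl⟩ : ∃ k', k = k' + 1 := ⟨k - 1, by omega⟩
  simp only [Nat.add_sub_cancel]
  set m := msq (k' + 1) with hm
  have hm1 : 1 ≤ m := hmsq _ (by omega)
  -- Part 1: compute Q
  have hmid : ∀ j, 1 ≤ j → j ≤ m → ∀ l, 1 ≤ l → M l ≠ M k' + j := by
    intro j hj1 hj2 l hl heq
    have h1 : k' < l := hmono.lt_iff_lt.mp (by omega)
    have h2 : l < k' + 1 := hmono.lt_iff_lt.mp (by rw [hMs]; omega)
    omega
  have hind : ∀ j, j ≤ m → Q (M k') (M k' + j) z = z ^ 2 ^ j := by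
    intro j
    induction j with
    | zero => intro _; simpa using hQ0 (M k') z
    | succ j ih =>
      intro hj
      have := hQs (M k') (M k' + j) z (by omega)
      rw [show M k' + (j + 1) = (M k' + j) + 1 from rfl, this,
        hP2 (M k' + j + 1) (fun l hl => by have := hmid (j + 1) (by omega) hj l hl; omega),
        ih (by omega), ← pow_mul, ← pow_succ]
  have hMk : M (k' + 1) = (M k' + m) + 1 := by rw [hMs]; omega
  have hQfinal : Q (M k') (M (k' + 1)) z = z ^ 2 ^ (m + 1) + c (k' + 1) := by
    rw [hMk, hQs (M k') (M k' + m) z (by omega), hind m le_rfl, ← hMk,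
      hP1 (k' + 1) (by omega), ← pow_mul, ← pow_succ]
  refine ⟨by rw [hQfinal], ?_⟩
  -- Part 2: the estimate
  set E := 2 ^ (m + 1) with hE
  have hE4 : 4 ≤ E := by
    calc 4 = 2 ^ 2 := by norm_num
    _ ≤ 2 ^ (m + 1) := Nat.pow_le_pow_right (by norm_num) (by omega)
  -- |c| < 2^E
  have hcpos : (0:ℝ) ≤ ‖c (k' + 1)‖ := norm_nonneg _
  have hsqrt : Real.sqrt (‖c (k' + 1)‖) < (2:ℝ) ^ 2 ^ m := by
    have := hinv (k' + 1) (by omega); linarith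
  have hcbound : ‖c (k' + 1)‖ < (2:ℝ) ^ E := by
    have h := pow_lt_pow_left₀ hsqrt (Real.sqrt_nonneg _) two_ne_zero
    rw [Real.sq_sqrt hcpos] at h
    calc ‖c (k' + 1)‖ < ((2:ℝ) ^ 2 ^ m) ^ 2 := h
    _ = (2:ℝ) ^ E := by rw [← pow_mul, hE, pow_succ]
  -- |z|^E > 2^(n*E)
  have hzE : (2:ℝ) ^ (n * E) < ‖z‖ ^ E := by
    have h := pow_lt_pow_left₀ hz (by positivity) (by omega : E ≠ 0)
    rwa [← pow_mul] at h
  -- 2^(n+1) + 2^E < 2^(n*E)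
  have hnE : n + 2 ≤ n * E := by nlinarith
  have hEnE : E + 2 ≤ n * E := by nlinarith
  have h1 : (2:ℝ) ^ (n + 1) * 2 ≤ 2 ^ (n * E) := by
    rw [← pow_succ]
    exact pow_le_pow_right₀ one_le_two (by omega)
  have h2 : (2:ℝ) ^ E * 2 < 2 ^ (n * E) := by
    rw [← pow_succ]
    exact pow_lt_pow_right₀ one_lt_two (by omega)
  -- triangle inequality
  have htri : ‖z ^ E‖ ≤ ‖z ^ E + c (k' + 1)‖ + ‖c (k' + 1)‖ := by
    have h := norm_add_le (z ^ E + c (k' + 1)) (-(c (k' + 1)))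
    simpa using h
  have habs : ‖z ^ E‖ = ‖z‖ ^ E := norm_pow _ _
  rw [habs] at htri
  linarith
end

section
/- For every z₀ ∈ E = ⋂_{k≥1} S_k, the entire orbit lies outside the closed unit disc: |Q_m(z₀)| > 1 for every m ≥ 0. -/
open Complex Metric Set Filter

/-- For every z₀ ∈ E = ⋂_{k≥1} S_k, the entire orbit lies outside the
closed unit disc: |Q_m(z₀)| > 1 for every m ≥ 0. -/
theorem stmt_1
    (c : ℕ → ℂ) (msq : ℕ → ℕ)
    (hc : ∀ k, 1 ≤ k → 4 < ‖c k‖)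
    (hmsq : ∀ k, 1 ≤ k → 1 ≤ msq k)
    (hinv : ∀ k, 1 ≤ k → Real.sqrt (‖c k‖) + 1 < (2 : ℝ) ^ 2 ^ msq k)
    (M : ℕ → ℕ) (hM0 : M 0 = 0)
    (hMs : ∀ k, M (k + 1) = M k + (msq (k + 1) + 1))
    (P : ℕ → ℂ → ℂ)
    (hP1 : ∀ k, 1 ≤ k → ∀ z, P (M k) z = z ^ 2 + c k)
    (hP2 : ∀ n, (∀ k, 1 ≤ k → M k ≠ n) → ∀ z, P n z = z ^ 2)
    (Q : ℕ → ℕ → ℂ → ℂ)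
    (hQ0 : ∀ n z, Q n n z = z)
    (hQs : ∀ a n z, a ≤ n → Q a (n + 1) z = P (n + 1) (Q a n z))
    (S : ℕ → Set ℂ)
    (hS : ∀ k, S k = {z : ℂ | ‖Q 0 (M k) z‖ ≤ 2})
    (E : Set ℂ) (hE : E = ⋂ k, ⋂ (_ : 1 ≤ k), S k) :
    ∀ z₀ ∈ E, ∀ m : ℕ, 1 < ‖Q 0 m z₀‖ := by
  classical
  intro z₀ hz₀ m
  by_contra h
  push_neg at h
  -- M is strictly monotone
  have hmono : StrictMono M := strictMono_nat_of_lt_succ (fun k => by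
    have := hmsq (k + 1) (by omega)
    rw [hMs]; omega)
  have hMk : ∀ k, k ≤ M k := by
    intro k
    induction k with
    | zero => omega
    | succ k ih => have h2 : M k < M (k + 1) := hmono (by omega); omega
  have hex : ∃ k, 1 ≤ k ∧ m < M k :=
    ⟨m + 1, by omega, lt_of_lt_of_le (Nat.lt_succ_self m) (hMk (m + 1))⟩
  obtain ⟨k, ⟨hk1, hkm⟩, hmin⟩ :
      ∃ k, (1 ≤ k ∧ m < M k) ∧ ∀ j, j < k → ¬(1 ≤ j ∧ m < M j) :=
    ⟨Nat.find hex, Nat.find_spec hex, fun j hj => Nat.find_min hex hj⟩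
  -- all iterates between m and M k - 1 stay in the unit disc
  have claim : ∀ d, m + d < M k → ‖Q 0 (m + d) z₀‖ ≤ 1 := by
    intro d
    induction d with
    | zero => intro _; simpa using h
    | succ d ih =>
      intro hd
      have hd' : m + d < M k := by omega
      have h1 := ih hd'
      have hnot : ∀ j, 1 ≤ j → M j ≠ m + d + 1 := by
        intro j hj hMj
        have hjk : j < k := by
          have : M j < M k := by omega
          exact hmono.lt_iff_lt.mp this
        exact hmin j hjk ⟨hj, by omega⟩
      have hQ : Q 0 (m + (d + 1)) z₀ = (Q 0 (m + d) z₀) ^ 2 := by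
        have := hQs 0 (m + d) z₀ (by omega)
        rw [show m + (d + 1) = m + d + 1 by omega, this, hP2 _ hnot]
      rw [hQ, norm_pow]
      calc ‖Q 0 (m + d) z₀‖ ^ 2 ≤ 1 ^ 2 := by
            apply pow_le_pow_left₀ (norm_nonneg _) h1
        _ = 1 := one_pow 2
  -- at step M k the orbit jumps out of the disc of radius 2
  have hn : m ≤ M k - 1 := by omega
  have h1 : ‖Q 0 (M k - 1) z₀‖ ≤ 1 := by
    have := claim (M k - 1 - m) (by omega)
    rwa [show m + (M k - 1 - m) = M k - 1 by omega] at this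
  set w := Q 0 (M k - 1) z₀ with hw
  have hQMk : Q 0 (M k) z₀ = w ^ 2 + c k := by
    have h2 := hQs 0 (M k - 1) z₀ (by omega)
    rw [show M k - 1 + 1 = M k by omega] at h2
    rw [h2, hP1 k hk1]
  have htri : ‖c k‖ ≤ ‖w ^ 2 + c k‖ + ‖w ^ 2‖ := by
    have := norm_add_le (w ^ 2 + c k) (-(w ^ 2))
    simpa [add_comm, add_left_comm] using this
  have hw2 : ‖w ^ 2‖ ≤ 1 := by
    rw [norm_pow]
    calc ‖w‖ ^ 2 ≤ 1 ^ 2 := by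
          apply pow_le_pow_left₀ (norm_nonneg _) h1
      _ = 1 := one_pow 2
  have hbig : 2 < ‖Q 0 (M k) z₀‖ := by
    rw [hQMk]
    have := hc k hk1
    linarith
  -- but z₀ ∈ S k
  have hmem : z₀ ∈ S k := by
    rw [hE] at hz₀
    exact mem_iInter.mp (mem_iInter.mp hz₀ k) hk1
  rw [hS k] at hmem
  exact absurd hmem (by simpa using not_le.mpr hbig)
end

section
/- For all integers 0 ≤ m < n and every z ∈ Q_m(E), where E = ⋂_{k≥1} S_k, the derivative of the composition satisfies |Q'_{m,n}(z)| ≥ 2^(n−m). In particular, for z ∈ E and every k ≥ 1, |Q'_{M_k}(z)| ≥ 2^(M_k). -/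
open Complex Metric Set Filter

/-- For all 0 ≤ m < n and every z ∈ Q_m(E), |Q'_{m,n}(z)| ≥ 2^(n−m).
In particular, for z ∈ E and every k ≥ 1, |Q'_{M_k}(z)| ≥ 2^(M_k). -/
theorem stmt_2
    (c : ℕ → ℂ) (msq : ℕ → ℕ)
    (hc : ∀ k, 1 ≤ k → 4 < ‖c k‖)
    (hmsq : ∀ k, 1 ≤ k → 1 ≤ msq k)
    (hinv : ∀ k, 1 ≤ k → Real.sqrt (‖c k‖) + 1 < (2 : ℝ) ^ 2 ^ msq k)
    (M : ℕ → ℕ) (hM0 : M 0 = 0)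
    (hMs : ∀ k, M (k + 1) = M k + (msq (k + 1) + 1))
    (P : ℕ → ℂ → ℂ)
    (hP1 : ∀ k, 1 ≤ k → ∀ z, P (M k) z = z ^ 2 + c k)
    (hP2 : ∀ n, (∀ k, 1 ≤ k → M k ≠ n) → ∀ z, P n z = z ^ 2)
    (Q : ℕ → ℕ → ℂ → ℂ)
    (hQ0 : ∀ n z, Q n n z = z)
    (hQs : ∀ a n z, a ≤ n → Q a (n + 1) z = P (n + 1) (Q a n z))
    (S : ℕ → Set ℂ)
    (hS : ∀ k, S k = {z : ℂ | ‖Q 0 (M k) z‖ ≤ 2})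
    (E : Set ℂ) (hE : E = ⋂ k, ⋂ (_ : 1 ≤ k), S k) :
    (∀ m n : ℕ, m < n → ∀ z ∈ Q 0 m '' E,
        (2 : ℝ) ^ (n - m) ≤ ‖deriv (Q m n) z‖) ∧
      (∀ z ∈ E, ∀ k, 1 ≤ k →
        (2 : ℝ) ^ (M k) ≤ ‖deriv (Q 0 (M k)) z‖) := by
  -- M is strictly monotone
  have hMmono : StrictMono M := by
    apply strictMono_nat_of_lt_succ
    intro k
    rw [hMs]
    omega
  have hMge : ∀ k, k ≤ M k := fun k => hMmono.le_apply
  -- membership in E gives bound 2 at times M k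
  have hES : ∀ w ∈ E, ∀ k, 1 ≤ k → ‖Q 0 (M k) w‖ ≤ 2 := by
    intro w hw k hk
    rw [hE] at hw
    have := Set.mem_iInter.1 hw k
    have := Set.mem_iInter.1 this hk
    rw [hS] at this
    exact this
  -- key claim: all orbit values of points of E have modulus ≥ 1
  have key : ∀ w ∈ E, ∀ j, 1 ≤ ‖Q 0 j w‖ := by
    intro w hw j
    by_contra h
    push_neg at h
    have hex : ∃ k, j < M k := ⟨j + 1, lt_of_lt_of_le (Nat.lt_succ_self j) (hMge (j + 1))⟩
    set k := Nat.find hex with hkdef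
    have hk : j < M k := Nat.find_spec hex
    have hk1 : 1 ≤ k := by
      by_contra hk0
      push_neg at hk0
      interval_cases k
      omega
    have hkm : M (k - 1) ≤ j := by
      have := Nat.find_min hex (show k - 1 < k by omega)
      omega
    -- no M k' lies strictly between M (k-1) and M k
    have hnomid : ∀ i, M (k - 1) < i → i < M k → ∀ k', 1 ≤ k' → M k' ≠ i := by
      intro i h1 h2 k' hk' heq
      rcases le_or_gt k' (k - 1) with h | h
      · have := hMmono.monotone h; omega
      · have := hMmono.monotone (show k ≤ k' by omega); omega
    -- orbit stays < 1 up to M k - 1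
    have step : ∀ i, j ≤ i → i < M k → ‖Q 0 i w‖ < 1 := by
      intro i
      induction i with
      | zero => intro h1 _; have hj0 : j = 0 := Nat.le_zero.1 h1; exact hj0 ▸ h
      | succ i ih =>
        intro h1 h2
        rcases Nat.lt_or_ge i j with hij | hij
        · have hji : j = i + 1 := by omega
          exact hji ▸ h
        · have hprev := ih hij (by omega)
          have hne : ∀ k', 1 ≤ k' → M k' ≠ i + 1 := hnomid (i + 1) (by omega) h2
          rw [hQs 0 i w (Nat.zero_le i), hP2 (i + 1) hne]
          rw [norm_pow]
          calc ‖Q 0 i w‖ ^ 2 < 1 ^ 2 := by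
                apply pow_lt_pow_left₀ hprev (norm_nonneg _) (by norm_num)
           _ = 1 := one_pow 2
    have hMk1 : 1 ≤ M k := by omega
    have hlast : ‖Q 0 (M k - 1) w‖ < 1 := step (M k - 1) (by omega) (by omega)
    have hQMk : Q 0 (M k) w = (Q 0 (M k - 1) w) ^ 2 + c k := by
      have : M k = (M k - 1) + 1 := by omega
      rw [this, hQs 0 (M k - 1) w (Nat.zero_le _)]
      rw [← this, hP1 k hk1]
    have hge : 2 < ‖Q 0 (M k) w‖ := by
      have h1 : ‖(Q 0 (M k - 1) w) ^ 2‖ < 1 := by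
        rw [norm_pow]
        nlinarith [norm_nonneg (Q 0 (M k - 1) w)]
      have h2 := hc k hk1
      have h3 := norm_sub_norm_le (c k) (-((Q 0 (M k - 1) w) ^ 2))
      rw [sub_neg_eq_add, norm_neg] at h3
      rw [hQMk, add_comm]
      linarith
    have := hES w hw k hk1
    linarith
  -- derivative of P n at any point
  have hPderiv : ∀ n w, HasDerivAt (P n) (2 * w) w := by
    intro n w
    by_cases h : ∃ k, 1 ≤ k ∧ M k = n
    · obtain ⟨k, hk1, hkn⟩ := h
      have hfun : P n = fun z => z ^ 2 + c k := funext fun z => by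
        rw [← hkn, hP1 k hk1]
      rw [hfun]
      simpa using (hasDerivAt_pow 2 w).add_const (c k)
    · push_neg at h
      have hfun : P n = fun z => z ^ 2 := funext fun z => by
        rw [hP2 n (fun k' hk' => h k' hk') z]
      rw [hfun]
      simpa using hasDerivAt_pow 2 w
  -- main derivative bound
  have main : ∀ m n, m ≤ n → ∀ z,
      (∀ j, m ≤ j → j < n → 1 ≤ ‖Q m j z‖) →
      ∃ d, HasDerivAt (Q m n) d z ∧ (2 : ℝ) ^ (n - m) ≤ ‖d‖ := by
    intro m n hmn
    induction n, hmn using Nat.le_induction with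
    | base =>
      intro z _
      refine ⟨1, ?_, by simp⟩
      have : Q m m = fun x => x := funext fun x => hQ0 m x
      rw [this]
      exact hasDerivAt_id z
    | succ n hmn ih =>
      intro z hz
      obtain ⟨d, hd, hdb⟩ := ih z (fun j h1 h2 => hz j h1 (by omega))
      have hqfun : Q m (n + 1) = fun x => P (n + 1) (Q m n x) :=
        funext fun x => hQs m n x hmn
      have hcomp : HasDerivAt (Q m (n + 1)) (2 * Q m n z * d) z := by
        rw [hqfun]
        exact (hPderiv (n + 1) (Q m n z)).comp z hd
      refine ⟨2 * Q m n z * d, hcomp, ?_⟩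
      have h1 : 1 ≤ ‖Q m n z‖ := hz n hmn (Nat.lt_succ_self n)
      have hstep : n + 1 - m = (n - m) + 1 := by omega
      rw [hstep, norm_mul, norm_mul]
      have h2 : ‖(2 : ℂ)‖ = 2 := by norm_num
      rw [h2, pow_succ]
      have hpos : (0 : ℝ) ≤ (2 : ℝ) ^ (n - m) := by positivity
      calc (2 : ℝ) ^ (n - m) * 2 = 2 * 1 * ((2:ℝ) ^ (n - m)) := by ring
        _ ≤ 2 * ‖Q m n z‖ * ‖d‖ := by
            apply mul_le_mul
            · nlinarith
            · exact hdb
            · positivity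
            · positivity
        _ = 2 * ‖Q m n z‖ * ‖d‖ := rfl
  -- transfer: Q m j (Q 0 m w) = Q 0 j w
  have htrans : ∀ m j w, m ≤ j → Q m j (Q 0 m w) = Q 0 j w := by
    intro m j w hmj
    induction j, hmj using Nat.le_induction with
    | base => exact hQ0 m (Q 0 m w)
    | succ j hmj ih =>
      rw [hQs m j _ hmj, hQs 0 j w (Nat.zero_le j), ih]
  have part1 : ∀ m n : ℕ, m < n → ∀ z ∈ Q 0 m '' E,
      (2 : ℝ) ^ (n - m) ≤ ‖deriv (Q m n) z‖ := by
    intro m n hmn z hz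
    obtain ⟨w, hw, rfl⟩ := hz
    obtain ⟨d, hd, hdb⟩ := main m n hmn.le (Q 0 m w) (fun j h1 _ => by
      rw [htrans m j w h1]; exact key w hw j)
    rw [hd.deriv]
    exact hdb
  refine ⟨part1, ?_⟩
  intro z hz k hk
  have hMk : 0 < M k := by have := hMge k; omega
  have hmem : z ∈ Q 0 0 '' E := ⟨z, hz, hQ0 0 z⟩
  have := part1 0 (M k) hMk z hmem
  simpa using this
end

section
/- Let c ∈ ℂ with |c| > 4 and let s ∈ ℂ satisfy s² = −c. Then every z ∈ ℂ with |z² + c| ≤ 2 satisfies |z − s| ≤ 1 or |z + s| ≤ 1; that is, the preimage of the closed disc D̄(0,2) under z ↦ z² + c is contained in D̄(s,1) ∪ D̄(−s,1). -/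
open Complex Metric Set

/-- If |c| > 4 and s² = −c, then the preimage of D̄(0,2) under
z ↦ z² + c is contained in D̄(s,1) ∪ D̄(−s,1). -/
theorem stmt_4
    (c s : ℂ) (hc : 4 < ‖c‖) (hs : s ^ 2 = -c) :
    ∀ z : ℂ, ‖z ^ 2 + c‖ ≤ 2 →
      ‖z - s‖ ≤ 1 ∨ ‖z + s‖ ≤ 1 := by
  intro z hz
  by_contra h
  push_neg at h
  obtain ⟨ha, hb⟩ := h
  have hfac : z ^ 2 + c = (z - s) * (z + s) := by
    have : z ^ 2 + c = z ^ 2 - s ^ 2 := by rw [hs]; ring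
    rw [this]; ring
  have hab : ‖z - s‖ * ‖z + s‖ ≤ 2 := by
    rw [← norm_mul, ← hfac]; exact hz
  have hs2 : ‖s‖ * ‖s‖ > 4 := by
    have : ‖s ^ 2‖ = ‖c‖ := by rw [hs, norm_neg]
    rw [pow_two, norm_mul] at this
    linarith
  have htri : 2 * ‖s‖ ≤ ‖z - s‖ + ‖z + s‖ := by
    have h1 : ‖(z + s) - (z - s)‖ ≤ ‖z + s‖ + ‖z - s‖ := by
      exact norm_sub_le (z + s) (z - s)
    have h2 : (z + s) - (z - s) = 2 * s := by ring
    rw [h2, norm_mul, Complex.norm_two] at h1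
    linarith
  have ha2 : ‖z - s‖ < 2 := by nlinarith
  have hb2 : ‖z + s‖ < 2 := by nlinarith
  have hslt : ‖s‖ < 2 := by linarith
  nlinarith [norm_nonneg s]
end

section
/- For every k ≥ 1, the survival sets satisfy S_{k+1} ⊆ S_k ⊆ D̄(0,2) ∖ D̄(0,1) (so every z ∈ S_k has 1 < |z| ≤ 2), and moreover Q_{M_k}(S_{k+1}) = Q_{M_k,M_{k+1}}^{-1}(D̄(0,2)) ⊆ D̄(0,2) ∖ D̄(0,1). -/
open Complex Metric Set Filter

/-- For every k ≥ 1, S_{k+1} ⊆ S_k ⊆ D̄(0,2) ∖ D̄(0,1), and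
Q_{M_k}(S_{k+1}) = Q_{M_k,M_{k+1}}^{-1}(D̄(0,2)) ⊆ D̄(0,2) ∖ D̄(0,1). -/
theorem stmt_8
    (c : ℕ → ℂ) (msq : ℕ → ℕ)
    (hc : ∀ k, 1 ≤ k → 4 < ‖c k‖)
    (hmsq : ∀ k, 1 ≤ k → 1 ≤ msq k)
    (hinv : ∀ k, 1 ≤ k → Real.sqrt (‖c k‖) + 1 < (2 : ℝ) ^ 2 ^ msq k)
    (M : ℕ → ℕ) (hM0 : M 0 = 0)
    (hMs : ∀ k, M (k + 1) = M k + (msq (k + 1) + 1))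
    (P : ℕ → ℂ → ℂ)
    (hP1 : ∀ k, 1 ≤ k → ∀ z, P (M k) z = z ^ 2 + c k)
    (hP2 : ∀ n, (∀ k, 1 ≤ k → M k ≠ n) → ∀ z, P n z = z ^ 2)
    (Q : ℕ → ℕ → ℂ → ℂ)
    (hQ0 : ∀ n z, Q n n z = z)
    (hQs : ∀ a n z, a ≤ n → Q a (n + 1) z = P (n + 1) (Q a n z))
    (S : ℕ → Set ℂ)
    (hS : ∀ k, S k = {z : ℂ | ‖Q 0 (M k) z‖ ≤ 2}) :
    ∀ k, 1 ≤ k →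
      S (k + 1) ⊆ S k ∧
      S k ⊆ Metric.closedBall (0 : ℂ) 2 \ Metric.closedBall (0 : ℂ) 1 ∧
      Q 0 (M k) '' S (k + 1) = {z : ℂ | ‖Q (M k) (M (k + 1)) z‖ ≤ 2} ∧
      Q 0 (M k) '' S (k + 1) ⊆
        Metric.closedBall (0 : ℂ) 2 \ Metric.closedBall (0 : ℂ) 1 := by
  -- M is strictly monotone
  have hMlt : ∀ k, M k < M (k + 1) := by
    intro k; have := hmsq (k + 1) (Nat.le_add_left 1 k); rw [hMs k]; omega
  have hMmono : StrictMono M := strictMono_nat_of_lt_succ hMlt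
  -- cocycle property
  have hco : ∀ a m n, a ≤ m → m ≤ n → ∀ z, Q a n z = Q m n (Q a m z) := by
    intro a m n ham hmn
    induction n, hmn using Nat.le_induction with
    | base => intro z; rw [hQ0]
    | succ n hmn ih =>
      intro z
      rw [hQs a n z (ham.trans hmn), hQs m n _ hmn, ih]
  -- block formula: pure squaring inside a block
  have hblock : ∀ k j, j ≤ msq (k + 1) → ∀ z, Q (M k) (M k + j) z = z ^ 2 ^ j := by
    intro k j
    induction j with
    | zero => intro _ z; simpa using hQ0 (M k) z
    | succ j ih =>
      intro hj z
      have hj' : j ≤ msq (k + 1) := Nat.le_of_succ_le hj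
      have hne : ∀ i, 1 ≤ i → M i ≠ M k + j + 1 := by
        intro i hi
        rcases le_or_gt i k with h | h
        · have := hMmono.monotone h; omega
        · have h2 : M (k + 1) ≤ M i := hMmono.monotone h
          rw [hMs k] at h2; omega
      have h1 : Q (M k) (M k + (j + 1)) z = P (M k + j + 1) (Q (M k) (M k + j) z) := by
        have := hQs (M k) (M k + j) z (Nat.le_add_right _ _)
        simpa [Nat.add_assoc] using this
      rw [h1, ih hj', hP2 (M k + j + 1) hne, ← pow_mul, ← pow_succ]
  -- full block formula
  have hQblock : ∀ k z, Q (M k) (M (k + 1)) z = z ^ 2 ^ (msq (k + 1) + 1) + c (k + 1) := by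
    intro k z
    have hm : M (k + 1) = (M k + msq (k + 1)) + 1 := by rw [hMs k]; omega
    rw [hm, hQs (M k) (M k + msq (k + 1)) z (Nat.le_add_right _ _),
      hblock k _ le_rfl, ← hm, hP1 (k + 1) (Nat.le_add_left 1 k), ← pow_mul, ← pow_succ]
  -- sqrt bound
  have hsq : ∀ k, 2 < Real.sqrt (‖c (k + 1)‖) := by
    intro k
    have hc' := hc (k + 1) (Nat.le_add_left 1 k)
    nlinarith [Real.sq_sqrt (norm_nonneg (c (k + 1))),
      Real.sqrt_nonneg (‖c (k + 1)‖)]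
  -- one-block escape from |z| > 2
  have hesc1 : ∀ k z, 2 < ‖z‖ → 2 < ‖Q (M k) (M (k + 1)) z‖ := by
    intro k z hz
    rw [hQblock]
    set m := msq (k + 1) with hmdef
    set cc := ‖c (k + 1)‖ with hccdef
    have hc' : (4 : ℝ) < cc := hc (k + 1) (Nat.le_add_left 1 k)
    have hinv' : Real.sqrt cc + 1 < (2 : ℝ) ^ 2 ^ m := hinv (k + 1) (Nat.le_add_left 1 k)
    have hs := hsq k
    have hsnn : (0 : ℝ) ≤ Real.sqrt cc := Real.sqrt_nonneg _
    have hssq : Real.sqrt cc ^ 2 = cc := Real.sq_sqrt (norm_nonneg _)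
    have hpow : (2 : ℝ) ^ 2 ^ (m + 1) < ‖z‖ ^ 2 ^ (m + 1) :=
      pow_lt_pow_left₀ hz (by norm_num) (Nat.two_pow_pos (m + 1)).ne'
    have h2N : (2 : ℝ) ^ 2 ^ (m + 1) = ((2 : ℝ) ^ 2 ^ m) ^ 2 := by
      rw [← pow_mul, ← pow_succ]
    have hbig : cc + 2 * Real.sqrt cc + 1 < ‖z‖ ^ 2 ^ (m + 1) := by
      have h3 : (Real.sqrt cc + 1) ^ 2 < ((2 : ℝ) ^ 2 ^ m) ^ 2 := by
        apply pow_lt_pow_left₀ hinv' (by positivity) (by norm_num)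
      nlinarith
    have htri : ‖z ^ 2 ^ (m + 1)‖ ≤
        ‖z ^ 2 ^ (m + 1) + c (k + 1)‖ + cc := by
      calc ‖z ^ 2 ^ (m + 1)‖
          = ‖z ^ 2 ^ (m + 1) + c (k + 1) + -c (k + 1)‖ := by
            rw [add_neg_cancel_right]
        _ ≤ ‖z ^ 2 ^ (m + 1) + c (k + 1)‖ + ‖-c (k + 1)‖ :=
            norm_add_le _ _
        _ = ‖z ^ 2 ^ (m + 1) + c (k + 1)‖ + cc := by rw [norm_neg]
    rw [norm_pow] at htri
    nlinarith
  -- one-block escape from |z| ≤ 1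
  have hesc1' : ∀ k z, ‖z‖ ≤ 1 → 2 < ‖Q (M k) (M (k + 1)) z‖ := by
    intro k z hz
    rw [hQblock]
    set m := msq (k + 1) with hmdef
    set cc := ‖c (k + 1)‖ with hccdef
    have hc' : (4 : ℝ) < cc := hc (k + 1) (Nat.le_add_left 1 k)
    have hzN : ‖z ^ 2 ^ (m + 1)‖ ≤ 1 := by
      rw [norm_pow]
      exact pow_le_one₀ (norm_nonneg z) hz
    have htri : cc ≤ ‖z ^ 2 ^ (m + 1) + c (k + 1)‖ + ‖z ^ 2 ^ (m + 1)‖ := by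
      calc cc = ‖z ^ 2 ^ (m + 1) + c (k + 1) + -(z ^ 2 ^ (m + 1))‖ := by
            rw [hccdef]; ring_nf
        _ ≤ ‖z ^ 2 ^ (m + 1) + c (k + 1)‖ + ‖-(z ^ 2 ^ (m + 1))‖ :=
            norm_add_le _ _
        _ = _ := by rw [norm_neg]
    linarith
  -- multi-block escape
  have hesc : ∀ j i, j ≤ i → ∀ z, 2 < ‖z‖ → 2 < ‖Q (M j) (M i) z‖ := by
    intro j i hji
    induction i, hji using Nat.le_induction with
    | base => intro z hz; rwa [hQ0]
    | succ i hji ih =>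
      intro z hz
      rw [hco (M j) (M i) (M (i + 1)) (hMmono.monotone hji)
        (hMmono.monotone (Nat.le_succ i))]
      exact hesc1 i _ (ih z hz)
  -- surjectivity of each P (n+1)
  have hPsurj : ∀ n, Function.Surjective (P (n + 1)) := by
    intro n w
    by_cases h : ∃ k, 1 ≤ k ∧ M k = n + 1
    · obtain ⟨k, hk, hMk⟩ := h
      obtain ⟨s, hs2⟩ := IsAlgClosed.exists_pow_nat_eq (w - c k) (n := 2) (by norm_num)
      refine ⟨s, ?_⟩
      rw [← hMk, hP1 k hk, hs2]; ring
    · obtain ⟨s, hs2⟩ := IsAlgClosed.exists_pow_nat_eq w (n := 2) (by norm_num)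
      refine ⟨s, ?_⟩
      rw [hP2 (n + 1) (fun k hk hMk => h ⟨k, hk, hMk⟩), hs2]
  -- surjectivity of Q a n
  have hQsurj : ∀ a n, a ≤ n → Function.Surjective (Q a n) := by
    intro a n han
    induction n, han using Nat.le_induction with
    | base => intro w; exact ⟨w, hQ0 a w⟩
    | succ n han ih =>
      intro w
      obtain ⟨v, hv⟩ := hPsurj n w
      obtain ⟨z, hz⟩ := ih v
      exact ⟨z, by rw [hQs a n z han, hz, hv]⟩
  -- membership in S
  have hmemS : ∀ j z, z ∈ S j ↔ ‖Q 0 (M j) z‖ ≤ 2 := by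
    intro j z; rw [hS]; exact Iff.rfl
  -- S j is contained in the annulus, for j ≥ 1
  have hSann : ∀ j, 1 ≤ j → ∀ z ∈ S j, 1 < ‖z‖ ∧ ‖z‖ ≤ 2 := by
    intro j hj z hz
    rw [hmemS] at hz
    constructor
    · by_contra h
      push_neg at h
      have h1 : 2 < ‖Q 0 (M 1) z‖ := by
        have := hesc1' 0 z h
        rwa [hM0] at this
      have h2 : 2 < ‖Q (M 1) (M j) (Q 0 (M 1) z)‖ := hesc 1 j hj _ h1
      have h3 : Q 0 (M j) z = Q (M 1) (M j) (Q 0 (M 1) z) := by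
        have := hco (M 0) (M 1) (M j) (hMmono.monotone (Nat.zero_le 1))
          (hMmono.monotone hj) z
        rwa [hM0] at this
      rw [h3] at hz; linarith
    · by_contra h
      push_neg at h
      have h1 : 2 < ‖Q (M 0) (M j) z‖ := hesc 0 j (Nat.zero_le j) z h
      rw [hM0] at h1; linarith
  intro k hk
  have hk1 : (1 : ℕ) ≤ k + 1 := le_trans hk (Nat.le_succ k)
  have hcomp : ∀ z, Q 0 (M (k + 1)) z = Q (M k) (M (k + 1)) (Q 0 (M k) z) := by
    intro z
    have := hco (M 0) (M k) (M (k + 1)) (hMmono.monotone (Nat.zero_le k))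
      (hMmono.monotone (Nat.le_succ k)) z
    rwa [hM0] at this
  -- image equality
  have himg : Q 0 (M k) '' S (k + 1) =
      {z : ℂ | ‖Q (M k) (M (k + 1)) z‖ ≤ 2} := by
    ext w
    constructor
    · rintro ⟨z, hz, rfl⟩
      rw [hmemS] at hz
      rw [hcomp] at hz
      exact hz
    · intro hw
      obtain ⟨z, rfl⟩ := hQsurj 0 (M k) (Nat.zero_le _) w
      refine ⟨z, ?_, rfl⟩
      rw [hmemS, hcomp]
      exact hw
  refine ⟨?_, ?_, himg, ?_⟩
  · -- S (k+1) ⊆ S k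
    intro z hz
    rw [hmemS] at hz ⊢
    by_contra h
    push_neg at h
    have := hesc1 k _ h
    rw [← hcomp] at this
    linarith
  · -- S k ⊆ annulus
    intro z hz
    obtain ⟨h1, h2⟩ := hSann k hk z hz
    simp only [Set.mem_diff, Metric.mem_closedBall, Complex.dist_eq, sub_zero, not_le]
    exact ⟨h2, h1⟩
  · -- image ⊆ annulus
    intro w hw
    rw [himg] at hw
    simp only [Set.mem_setOf_eq] at hw
    simp only [Set.mem_diff, Metric.mem_closedBall, Complex.dist_eq, sub_zero, not_le]
    constructor
    · by_contra h
      push_neg at h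
      have := hesc1 k w h
      linarith
    · by_contra h
      push_neg at h
      have := hesc1' k w h
      linarith
end

section
/- For every k ≥ 1, the survival set S_k = Q_{M_k}^{-1}(D̄(0,2)) has exactly 2^(M_k) connected components. -/
open Complex Metric Set Filter

noncomputable def brL (c : ℂ) (z : ℂ) : ℂ :=
  Complex.log ((z - c) / (-c)) + Complex.log (-c)

noncomputable def br (c : ℂ) (N : ℕ) (i : ℕ) (z : ℂ) : ℂ :=
  Complex.exp ((brL c z + 2 * (Real.pi : ℂ) * Complex.I * (i : ℂ)) / (N : ℂ))

section Branch

variable {c : ℂ} {N : ℕ}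

lemma hc_ne (hc : 4 < ‖c‖) : c ≠ 0 := by
  intro h; rw [h] at hc; simp at hc; linarith

lemma quot_re (hc : 4 < ‖c‖) {z : ℂ} (hz : ‖z‖ ≤ 2) :
    (1 : ℝ) / 2 ≤ ((z - c) / (-c)).re := by
  have hc0 : c ≠ 0 := hc_ne hc
  have h1 : (z - c) / (-c) = 1 - z / c := by
    rw [div_neg, ← neg_div, neg_sub, sub_div, div_self hc0]
  have h2 : ‖(z - c) / (-c) - 1‖ ≤ 1 / 2 := by
    rw [h1]
    have : (1 : ℂ) - z / c - 1 = -(z / c) := by ring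
    rw [this, norm_neg, norm_div]
    rw [div_le_div_iff₀ (by positivity) (by norm_num)]
    nlinarith
  have h3 : |((z - c) / (-c) - 1).re| ≤ 1/2 := le_trans (Complex.abs_re_le_norm _) h2
  have h4 : ((z - c) / (-c) - 1).re = ((z - c) / (-c)).re - 1 := by simp
  rw [h4] at h3
  have := abs_le.mp h3
  linarith [this.1]

lemma quot_slit (hc : 4 < ‖c‖) {z : ℂ} (hz : ‖z‖ ≤ 2) :
    (z - c) / (-c) ∈ Complex.slitPlane := by
  rw [Complex.mem_slitPlane_iff]
  left; linarith [quot_re hc hz]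

lemma exp_brL (hc : 4 < ‖c‖) {z : ℂ} (hz : ‖z‖ ≤ 2) :
    Complex.exp (brL c z) = z - c := by
  have hc0 : c ≠ 0 := hc_ne hc
  have hq : (z - c) / (-c) ≠ 0 := by
    intro h
    have := quot_re hc hz
    rw [h] at this; simp at this; linarith
  rw [brL, Complex.exp_add, Complex.exp_log hq, Complex.exp_log (neg_ne_zero.mpr hc0)]
  field_simp

lemma br_pow (hc : 4 < ‖c‖) (hN : 1 ≤ N) {z : ℂ} (hz : ‖z‖ ≤ 2) (i : ℕ) :
    (br c N i z) ^ N = z - c := by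
  have hN0 : (N : ℂ) ≠ 0 := Nat.cast_ne_zero.mpr (by omega)
  rw [br, ← Complex.exp_nat_mul]
  have : (N : ℂ) * ((brL c z + 2 * (Real.pi : ℂ) * Complex.I * (i : ℂ)) / (N : ℂ))
      = brL c z + 2 * (Real.pi : ℂ) * Complex.I * (i : ℂ) := by field_simp
  rw [this, Complex.exp_add, exp_brL hc hz]
  rw [show (2 * (Real.pi : ℂ) * Complex.I * (i : ℂ)) = (i : ℕ) * (2 * (Real.pi : ℂ) * Complex.I) by push_cast; ring]
  rw [Complex.exp_nat_mul, Complex.exp_two_pi_mul_I, one_pow, mul_one]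

lemma sub_c_abs_lb (hc : 4 < ‖c‖) {z : ℂ} (hz : ‖z‖ ≤ 2) :
    2 < ‖z - c‖ := by
  have h := norm_sub_norm_le c z
  have h2 : ‖c - z‖ = ‖z - c‖ := by
    rw [← neg_sub, norm_neg]
  rw [h2] at h
  linarith

lemma br_abs_le (hc : 4 < ‖c‖) (hN : 1 ≤ N)
    (hNc : ‖c‖ + 2 < (2 : ℝ) ^ N) {z : ℂ} (hz : ‖z‖ ≤ 2) (i : ℕ) :
    ‖br c N i z‖ ≤ 2 := by
  by_contra h
  push_neg at h
  have h1 : (2 : ℝ) ^ N < (‖br c N i z‖) ^ N :=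
    pow_lt_pow_left₀ h (by norm_num) (by omega)
  rw [← norm_pow, br_pow hc hN hz] at h1
  have h2 : ‖z - c‖ ≤ ‖z‖ + ‖c‖ := by
    have := norm_sub_le z c
    simpa using this
  linarith

lemma br_continuousOn (hc : 4 < ‖c‖) (i : ℕ) :
    ContinuousOn (br c N i) (closedBall (0 : ℂ) 2) := by
  intro z hz
  have hz2 : ‖z‖ ≤ 2 := by
    rwa [mem_closedBall_zero_iff] at hz
  have h1 : ContinuousAt (fun y : ℂ => (y - c) / (-c)) z := by fun_prop
  have h2 : ContinuousAt (fun y : ℂ => Complex.log ((y - c) / (-c))) z := by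
    have := ContinuousAt.comp (g := Complex.log) (f := fun y : ℂ => (y - c) / (-c))
      (continuousAt_clog (quot_slit hc hz2)) h1
    exact this
  have h3 : ContinuousAt (fun y : ℂ =>
      (Complex.log ((y - c) / (-c)) + Complex.log (-c) + 2 * (Real.pi : ℂ) * Complex.I * (i : ℂ))
        / (N : ℂ)) z :=
    ((h2.add continuousAt_const).add continuousAt_const).div_const _
  have h4 := Complex.continuous_exp.continuousAt.comp h3
  exact h4.continuousWithinAt

lemma two_pi_I_ne : (2 : ℂ) * (Real.pi : ℂ) * Complex.I ≠ 0 := by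
  simp [Real.pi_ne_zero, Complex.I_ne_zero]

lemma br_inj (hc : 4 < ‖c‖) (hN : 1 ≤ N) {i j : ℕ} (hi : i < N) (hj : j < N)
    {z z' : ℂ} (hz : ‖z‖ ≤ 2) (hz' : ‖z'‖ ≤ 2)
    (h : br c N i z = br c N j z') : i = j ∧ z = z' := by
  have hzz : z = z' := by
    have := congrArg (fun w => w ^ N + c) h
    simpa [br_pow hc hN hz, br_pow hc hN hz'] using this
  subst hzz
  refine ⟨?_, rfl⟩
  rw [br, br, Complex.exp_eq_exp_iff_exists_int] at h
  obtain ⟨n, hn⟩ := h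
  have hN0 : (N : ℂ) ≠ 0 := Nat.cast_ne_zero.mpr (by omega)
  have key : (2 : ℂ) * (Real.pi : ℂ) * Complex.I * (i : ℂ)
      = 2 * (Real.pi : ℂ) * Complex.I * ((j : ℂ) + (n : ℂ) * (N : ℂ)) := by
    field_simp at hn
    linear_combination hn
  have key2 : (i : ℂ) = (j : ℂ) + (n : ℂ) * (N : ℂ) :=
    mul_left_cancel₀ two_pi_I_ne (by linear_combination key)
  have key3 : (i : ℤ) = (j : ℤ) + n * (N : ℤ) := by exact_mod_cast key2
  have hiZ : (i : ℤ) < N := by exact_mod_cast hi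
  have hjZ : (j : ℤ) < N := by exact_mod_cast hj
  have h0i : (0 : ℤ) ≤ i := Int.ofNat_nonneg i
  have h0j : (0 : ℤ) ≤ j := Int.ofNat_nonneg j
  have hn0 : n = 0 := by
    rcases lt_trichotomy n 0 with h' | h' | h'
    · have : n * (N : ℤ) ≤ -N := by
        have : n ≤ -1 := by omega
        nlinarith
      omega
    · exact h'
    · have : (N : ℤ) ≤ n * N := by
        have : 1 ≤ n := by omega
        nlinarith
      omega
  rw [hn0] at key3
  omega

lemma br_ne_zero (c : ℂ) (N i : ℕ) (z : ℂ) : br c N i z ≠ 0 := Complex.exp_ne_zero _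

lemma br_surj (hc : 4 < ‖c‖) (hN : 1 ≤ N) {z w : ℂ} (hz : ‖z‖ ≤ 2)
    (hw : w ^ N + c = z) : ∃ i, i < N ∧ w = br c N i z := by
  have hN0 : (N : ℂ) ≠ 0 := Nat.cast_ne_zero.mpr (by omega)
  have hzc : z - c ≠ 0 := by
    intro h
    have := sub_c_abs_lb hc hz
    rw [h] at this; simp at this; linarith
  have hwN : w ^ N = z - c := eq_sub_of_add_eq hw
  have hw0 : w ≠ 0 := by
    intro h
    rw [h, zero_pow (by omega)] at hwN
    exact hzc hwN.symm
  have hb0 : (br c N 0 z) ^ N = z - c := br_pow hc hN hz 0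
  have hq : (w / br c N 0 z) ^ N = 1 := by
    rw [div_pow, hwN, hb0, div_self hzc]
  have hqne : w / br c N 0 z ≠ 0 := div_ne_zero hw0 (br_ne_zero _ _ _ _)
  have hexp : Complex.exp ((N : ℂ) * Complex.log (w / br c N 0 z)) = 1 := by
    rw [Complex.exp_nat_mul, Complex.exp_log hqne, hq]
  rw [Complex.exp_eq_one_iff] at hexp
  obtain ⟨n, hn⟩ := hexp
  have hNposZ : (0 : ℤ) < (N : ℤ) := by exact_mod_cast (by omega : 0 < N)
  have hmodn : (0 : ℤ) ≤ n % (N : ℤ) := Int.emod_nonneg n (by omega)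
  have hmodl : n % (N : ℤ) < (N : ℤ) := Int.emod_lt_of_pos n hNposZ
  refine ⟨(n % (N : ℤ)).toNat, by omega, ?_⟩
  have hlog : Complex.log (w / br c N 0 z) = (n : ℂ) * (2 * (Real.pi : ℂ) * Complex.I) / (N : ℂ) := by
    rw [eq_div_iff hN0]
    linear_combination hn
  have hw' : w = Complex.exp ((brL c z + 2 * (Real.pi : ℂ) * Complex.I * ((0 : ℕ) : ℂ)) / (N : ℂ)
      + Complex.log (w / br c N 0 z)) := by
    rw [Complex.exp_add, Complex.exp_log hqne]
    rw [show Complex.exp ((brL c z + 2 * (Real.pi : ℂ) * Complex.I * ((0 : ℕ) : ℂ)) / (N : ℂ))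
        = br c N 0 z from rfl]
    rw [mul_div_cancel₀ w (br_ne_zero c N 0 z)]
  rw [hlog] at hw'
  rw [hw', br]
  apply Complex.exp_eq_exp_iff_exists_int.mpr
  refine ⟨n / (N : ℤ), ?_⟩
  have hcast : (((n % (N : ℤ)).toNat : ℕ) : ℂ) = (n : ℂ) - ((n / (N : ℤ) : ℤ) : ℂ) * (N : ℂ) := by
    have h1 : ((n % (N : ℤ)).toNat : ℤ) = n % (N : ℤ) := Int.toNat_of_nonneg hmodn
    have h2 : n % (N : ℤ) = n - (N : ℤ) * (n / (N : ℤ)) := Int.emod_def n (N : ℤ)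
    rw [show (((n % (N : ℤ)).toNat : ℕ) : ℂ) = (((n % (N : ℤ)).toNat : ℤ) : ℂ) by push_cast; ring,
      h1, h2]
    push_cast
    ring
  rw [hcast]
  field_simp
  ring

end Branch


/-- A "good" decomposition of a set into disjoint nonempty compact connected pieces
inside the closed ball of radius 2. -/
def GoodDecomp (T : Set ℂ) (F : Finset (Set ℂ)) : Prop :=
  ⋃₀ ↑F = T ∧
  (∀ C ∈ F, C.Nonempty ∧ IsCompact C ∧ IsConnected C ∧ C ⊆ closedBall (0 : ℂ) 2) ∧
  (∀ C ∈ F, ∀ D ∈ F, C ≠ D → Disjoint C D)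

lemma step_decomp (c : ℂ) (hc : 4 < ‖c‖) (N : ℕ) (hN : 1 ≤ N)
    (hNc : ‖c‖ + 2 < (2 : ℝ) ^ N)
    (T : Set ℂ) (F : Finset (Set ℂ)) (hF : GoodDecomp T F) :
    ∃ G : Finset (Set ℂ), G.card = F.card * N ∧ GoodDecomp {w : ℂ | w ^ N + c ∈ T} G := by
  classical
  obtain ⟨hun, hgood, hdisj⟩ := hF
  -- pieces are closed-ball-bounded, with abs ≤ 2 pointwise
  have habs : ∀ C ∈ F, ∀ z ∈ C, ‖z‖ ≤ 2 := by
    intro C hC z hz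
    have := (hgood C hC).2.2.2 hz
    rwa [mem_closedBall_zero_iff] at this
  -- pushing forward a branch image recovers the piece
  have hpush : ∀ C ∈ F, ∀ i : ℕ, (fun w => w ^ N + c) '' (br c N i '' C) = C := by
    intro C hC i
    rw [Set.image_image]
    have : ∀ z ∈ C, (br c N i z) ^ N + c = z := by
      intro z hz
      rw [br_pow hc hN (habs C hC z hz) i]
      ring
    calc (fun z => (br c N i z) ^ N + c) '' C = id '' C := Set.image_congr this
      _ = C := Set.image_id C
  set f : Set ℂ × Fin N → Set ℂ := fun p => br c N (p.2 : ℕ) '' p.1 with hf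
  refine ⟨Finset.image f (F ×ˢ Finset.univ), ?_, ?_, ?_, ?_⟩
  · rw [Finset.card_image_of_injOn, Finset.card_product, Finset.card_univ, Fintype.card_fin]
    intro p hp q hq hpq
    simp only [Finset.mem_coe, Finset.mem_product, Finset.mem_univ, and_true] at hp hq
    have hCD : p.1 = q.1 := by
      have := congrArg (fun s => (fun w => w ^ N + c) '' s) hpq
      simpa [hf, hpush p.1 hp (p.2 : ℕ), hpush q.1 hq (q.2 : ℕ)] using this
    obtain ⟨z, hz⟩ := (hgood p.1 hp).1
    have hzim : br c N (p.2 : ℕ) z ∈ f q := by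
      rw [← hpq]; exact ⟨z, hz, rfl⟩
    obtain ⟨z', hz', hzz'⟩ := hzim
    rw [← hCD] at hz'
    have := br_inj hc hN q.2.2 p.2.2 (habs p.1 hp z' hz') (habs p.1 hp z hz) hzz'
    have h2 : p.2 = q.2 := by
      apply Fin.ext
      omega
    exact Prod.ext hCD h2
  · ext w
    simp only [Set.mem_sUnion, Finset.mem_coe, Finset.coe_image, Set.mem_image,
      Set.mem_setOf_eq]
    constructor
    · rintro ⟨D, ⟨p, hp, rfl⟩, hwD⟩
      simp only [Finset.mem_coe, Finset.mem_product, Finset.mem_univ, and_true] at hp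
      obtain ⟨z, hz, rfl⟩ := hwD
      rw [br_pow hc hN (habs p.1 hp z hz) (p.2 : ℕ)]
      rw [← hun]
      have : z - c + c = z := by ring
      rw [this]
      exact ⟨p.1, hp, hz⟩
    · intro hw
      rw [← hun] at hw
      obtain ⟨C, hC, hzC⟩ := hw
      obtain ⟨i, hi, hwi⟩ := br_surj hc hN (habs C hC _ hzC) rfl
      refine ⟨br c N i '' C, ⟨(C, ⟨i, hi⟩), by simpa using hC, rfl⟩, ⟨_, hzC, hwi.symm⟩⟩
  · rintro D hD
    rw [Finset.mem_image] at hD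
    obtain ⟨p, hp, rfl⟩ := hD
    simp only [Finset.mem_product, Finset.mem_univ, and_true] at hp
    obtain ⟨hne, hcomp, hconn, hsub⟩ := hgood p.1 hp
    have hcont : ContinuousOn (br c N (p.2 : ℕ)) p.1 :=
      (br_continuousOn hc (p.2 : ℕ)).mono hsub
    refine ⟨hne.image _, hcomp.image_of_continuousOn hcont, hconn.image _ hcont, ?_⟩
    rintro w ⟨z, hz, rfl⟩
    rw [mem_closedBall_zero_iff]
    exact_mod_cast br_abs_le hc hN hNc (habs p.1 hp z hz) (p.2 : ℕ)
  · rintro D hD E hE hDE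
    rw [Finset.mem_image] at hD hE
    obtain ⟨p, hp, rfl⟩ := hD
    obtain ⟨q, hq, rfl⟩ := hE
    simp only [Finset.mem_product, Finset.mem_univ, and_true] at hp hq
    rw [Set.disjoint_left]
    rintro w ⟨z, hz, rfl⟩ ⟨z', hz', hzz'⟩
    have hij := br_inj hc hN q.2.2 p.2.2 (habs q.1 hq z' hz') (habs p.1 hp z hz) hzz'
    have hzeq : z' = z := hij.2
    rw [hzeq] at hz'
    by_cases hCC : p.1 = q.1
    · apply hDE
      have h2 : (p.2 : ℕ) = (q.2 : ℕ) := hij.1.symm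
      rw [hf]
      simp only
      rw [hCC, h2]
    · exact Set.disjoint_left.mp (hdisj p.1 hp q.1 hq hCC) hz hz'

lemma comps_count (Sset : Set ℂ) (F : Finset (Set ℂ))
    (hun : ⋃₀ ↑F = Sset)
    (hgood : ∀ C ∈ F, C.Nonempty ∧ IsCompact C ∧ IsConnected C)
    (hdisj : ∀ C ∈ F, ∀ D ∈ F, C ≠ D → Disjoint C D) :
    {C : Set ℂ | ∃ z ∈ Sset, C = connectedComponentIn Sset z} = ↑F := by
  classical
  have hsubS : ∀ C ∈ F, C ⊆ Sset := by
    intro C hC z hz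
    rw [← hun]; exact ⟨C, hC, hz⟩
  have key : ∀ C ∈ F, ∀ z ∈ C, connectedComponentIn Sset z = C := by
    intro C hC z hz
    have hzS : z ∈ Sset := hsubS C hC hz
    apply Set.Subset.antisymm
    · -- component ⊆ C via separation
      set R : Set ℂ := ⋃₀ ↑(F.erase C) with hR
      have hRcomp : IsCompact R := by
        rw [hR, Set.sUnion_eq_biUnion]
        apply Set.Finite.isCompact_biUnion (Finset.finite_toSet _)
        intro D hD
        exact (hgood D (Finset.mem_of_mem_erase hD)).2.1
      have hCcomp : IsCompact C := (hgood C hC).2.1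
      have hCR : Disjoint C R := by
        rw [hR, Set.disjoint_sUnion_right]
        intro D hD
        rw [Finset.mem_coe, Finset.mem_erase] at hD
        exact hdisj C hC D hD.2 (Ne.symm hD.1)
      obtain ⟨U, V, hU, hV, hCU, hRV, hUV⟩ :=
        SeparatedNhds.of_isCompact_isCompact hCcomp hRcomp hCR
      have hSCR : Sset = C ∪ R := by
        have hFi : (F : Set (Set ℂ)) = insert C ↑(F.erase C) := by
          rw [← Finset.coe_insert, Finset.insert_erase hC]
        rw [← hun, hFi, Set.sUnion_insert, hR]
      have hTsub : connectedComponentIn Sset z ⊆ U ∪ V := by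
        intro x hx
        have := connectedComponentIn_subset Sset z hx
        rw [hSCR] at this
        rcases this with h | h
        · exact Or.inl (hCU h)
        · exact Or.inr (hRV h)
      have hTU : connectedComponentIn Sset z ⊆ U :=
        isPreconnected_connectedComponentIn.subset_left_of_subset_union hU hV hUV hTsub
          ⟨z, mem_connectedComponentIn hzS, hCU hz⟩
      intro x hx
      have hxS := connectedComponentIn_subset Sset z hx
      rw [hSCR] at hxS
      rcases hxS with h | h
      · exact h
      · exact absurd (hTU hx) (Set.disjoint_left.mp hUV.symm (hRV h))
    · exact (hgood C hC).2.2.isPreconnected.subset_connectedComponentIn hz (hsubS C hC)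
  ext C
  simp only [Set.mem_setOf_eq, Finset.mem_coe]
  constructor
  · rintro ⟨z, hzS, rfl⟩
    have hz' : z ∈ ⋃₀ (↑F : Set (Set ℂ)) := by rw [hun]; exact hzS
    obtain ⟨D, hD, hzD⟩ := hz'
    rw [key D hD z hzD]
    exact hD
  · intro hC
    obtain ⟨z, hz⟩ := (hgood C hC).1
    exact ⟨z, hsubS C hC hz, (key C hC z hz).symm⟩

/-- For every k ≥ 1, the survival set S_k has exactly 2^(M_k)
connected components. -/
theorem stmt_9
    (c : ℕ → ℂ) (msq : ℕ → ℕ)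
    (hc : ∀ k, 1 ≤ k → 4 < ‖c k‖)
    (hmsq : ∀ k, 1 ≤ k → 1 ≤ msq k)
    (hinv : ∀ k, 1 ≤ k → Real.sqrt (‖c k‖) + 1 < (2 : ℝ) ^ 2 ^ msq k)
    (M : ℕ → ℕ) (hM0 : M 0 = 0)
    (hMs : ∀ k, M (k + 1) = M k + (msq (k + 1) + 1))
    (P : ℕ → ℂ → ℂ)
    (hP1 : ∀ k, 1 ≤ k → ∀ z, P (M k) z = z ^ 2 + c k)
    (hP2 : ∀ n, (∀ k, 1 ≤ k → M k ≠ n) → ∀ z, P n z = z ^ 2)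
    (Q : ℕ → ℕ → ℂ → ℂ)
    (hQ0 : ∀ n z, Q n n z = z)
    (hQs : ∀ a n z, a ≤ n → Q a (n + 1) z = P (n + 1) (Q a n z))
    (S : ℕ → Set ℂ)
    (hS : ∀ k, S k = {z : ℂ | ‖Q 0 (M k) z‖ ≤ 2}) :
    ∀ k, 1 ≤ k →
      {C : Set ℂ | ∃ z ∈ S k, C = connectedComponentIn (S k) z}.ncard = 2 ^ M k := by
  intro k hk
  have hMmono : StrictMono M := strictMono_nat_of_lt_succ (fun n => by rw [hMs n]; omega)
  -- splitting the composition
  have hsplit : ∀ a b n z, a ≤ b → b ≤ n → Q a n z = Q b n (Q a b z) := by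
    intro a b n z hab hbn
    induction n, hbn using Nat.le_induction with
    | base => rw [hQ0]
    | succ n hbn ih => rw [hQs a n z (le_trans hab hbn), hQs b n _ hbn, ih]
  -- runs of pure squarings
  have hpow : ∀ a t z, (∀ i, a < i → i ≤ a + t → ∀ k', 1 ≤ k' → M k' ≠ i) →
      Q a (a + t) z = z ^ 2 ^ t := by
    intro a t
    induction t with
    | zero => intro z _; rw [Nat.add_zero, hQ0]; simp
    | succ t ih =>
      intro z hfree
      rw [show a + (t + 1) = (a + t) + 1 from rfl, hQs a (a + t) z (Nat.le_add_right a t)]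
      rw [hP2 (a + t + 1) (fun k' hk' => hfree _ (by omega) (by omega) k' hk') _]
      rw [ih z (fun i h1 h2 k' hk' => hfree i h1 (by omega) k' hk')]
      rw [← pow_mul, ← pow_succ]
  -- the segment between consecutive marked times
  have hseg : ∀ j z, Q (M j) (M (j + 1)) z = z ^ 2 ^ (msq (j + 1) + 1) + c (j + 1) := by
    intro j z
    have hM1 : M (j + 1) = (M j + msq (j + 1)) + 1 := by rw [hMs]; omega
    have hfree : ∀ i, M j < i → i ≤ M j + msq (j + 1) → ∀ k', 1 ≤ k' → M k' ≠ i := by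
      intro i hi1 hi2 k' hk' heq
      rcases le_or_gt k' j with h | h
      · have := hMmono.monotone h
        omega
      · have : M (j + 1) ≤ M k' := hMmono.monotone h
        omega
    rw [hM1, hQs (M j) (M j + msq (j + 1)) z (Nat.le_add_right _ _)]
    rw [hpow (M j) (msq (j + 1)) z hfree]
    rw [show M j + msq (j + 1) + 1 = M (j + 1) from hM1.symm]
    rw [hP1 (j + 1) (by omega) _]
    rw [← pow_mul, ← pow_succ]
  -- numerical bound
  have hnum : ∀ j, 1 ≤ j → ‖c j‖ + 2 < (2 : ℝ) ^ (2 ^ (msq j + 1)) := by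
    intro j hj
    have h1 := hinv j hj
    have h2 := hc j hj
    have hm := hmsq j hj
    set s : ℝ := Real.sqrt (‖c j‖) with hs
    set B : ℝ := (2 : ℝ) ^ (2 ^ msq j) with hB
    have hB4 : (4 : ℝ) ≤ B := by
      rw [hB]
      calc (4 : ℝ) = 2 ^ (2 : ℕ) := by norm_num
        _ ≤ 2 ^ (2 ^ msq j) := by
            apply pow_le_pow_right₀ (by norm_num)
            calc 2 = 2 ^ 1 := rfl
              _ ≤ 2 ^ msq j := Nat.pow_le_pow_right (by norm_num) hm
    have hsq : s ^ 2 = ‖c j‖ := Real.sq_sqrt (by positivity)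
    have hs0 : 0 ≤ s := Real.sqrt_nonneg _
    have hfin : (2 : ℝ) ^ (2 ^ (msq j + 1)) = B ^ 2 := by
      rw [hB, ← pow_mul, pow_succ]
    rw [hfin]
    have h2s : 2 < s := by nlinarith
    have hlt : (s + 1) ^ 2 < B ^ 2 := by nlinarith
    nlinarith
  -- the downward induction
  have claim : ∀ d j, j + d = k → ∃ Fs : Finset (Set ℂ),
      Fs.card = 2 ^ (M k - M j) ∧
      GoodDecomp {w : ℂ | Q (M j) (M k) w ∈ closedBall (0 : ℂ) 2} Fs := by
    intro d
    induction d with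
    | zero =>
      intro j hj
      have hjk : j = k := by omega
      subst hjk
      refine ⟨{closedBall (0 : ℂ) 2}, by simp, ?_, ?_, ?_⟩
      · ext w
        simp [hQ0]
      · intro C hC
        rw [Finset.mem_singleton] at hC
        subst hC
        exact ⟨⟨0, mem_closedBall_self (by norm_num)⟩, isCompact_closedBall _ _,
          (convex_closedBall (0 : ℂ) 2).isConnected ⟨0, mem_closedBall_self (by norm_num)⟩,
          subset_rfl⟩
      · intro C hC D hD hne
        rw [Finset.mem_singleton] at hC hD
        exact absurd (hC.trans hD.symm) hne
    | succ d ih =>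
      intro j hj
      have hjk1 : j + 1 ≤ k := by omega
      obtain ⟨Fs, hcard, hgd⟩ := ih (j + 1) (by omega)
      obtain ⟨Gs, hGcard, hGgd⟩ := step_decomp (c (j + 1)) (hc (j + 1) (by omega))
        (2 ^ (msq (j + 1) + 1)) Nat.one_le_two_pow (hnum (j + 1) (by omega)) _ Fs hgd
      have h2 : M j ≤ M (j + 1) := hMmono.monotone (by omega)
      have h1 : M (j + 1) ≤ M k := hMmono.monotone hjk1
      refine ⟨Gs, ?_, ?_⟩
      · rw [hGcard, hcard, ← pow_add]
        congr 1
        have h3 := hMs j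
        omega
      · have hseteq : {w : ℂ | Q (M j) (M k) w ∈ closedBall (0 : ℂ) 2}
            = {w : ℂ | w ^ 2 ^ (msq (j + 1) + 1) + c (j + 1)
                ∈ {v : ℂ | Q (M (j + 1)) (M k) v ∈ closedBall (0 : ℂ) 2}} := by
          ext w
          simp only [Set.mem_setOf_eq]
          rw [hsplit (M j) (M (j + 1)) (M k) w h2 h1, hseg j w]
        rw [hseteq]
        exact hGgd
  obtain ⟨Fs, hcard, hun, hgood, hdisj⟩ := claim k 0 (by omega)
  have hSeq : {w : ℂ | Q (M 0) (M k) w ∈ closedBall (0 : ℂ) 2} = S k := by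
    rw [hS k, hM0]
    ext w
    simp [mem_closedBall_zero_iff]
  rw [hSeq] at hun
  rw [comps_count (S k) Fs hun
      (fun C hC => ⟨(hgood C hC).1, (hgood C hC).2.1, (hgood C hC).2.2.1⟩) hdisj,
    Set.ncard_coe_finset, hcard, hM0]
  simp
end

section
/- If z ∈ ℂ satisfies |Q_{M_k}(z)| > 2 for some k ≥ 1 (i.e., z ∉ S_k), then there exists an open neighbourhood U of z such that inf_{w ∈ U} |Q_n(w)| → ∞ as n → ∞; in particular Q_n(z) → ∞ and the orbit escapes to infinity locally uniformly near z. -/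
open Complex Metric Set Filter

/-- Key arithmetic estimate for the escape argument. -/
lemma stmt10_arith (s C : ℝ) (m : ℕ) (hs : 2 < s) (hC : 4 < C)
    (hinv2 : Real.sqrt C + 1 < (2 : ℝ) ^ 2 ^ m) :
    s ^ 2 + C ≤ (s ^ 2 ^ m) ^ 2 := by
  set u := Real.sqrt C with hu
  have hC0 : (0 : ℝ) ≤ C := by linarith
  have hCu : u ^ 2 = C := Real.sq_sqrt hC0
  have hu0 : 0 ≤ u := Real.sqrt_nonneg C
  have hu2 : 2 < u := by nlinarith [hCu, hu0]
  have hne : (2 : ℕ) ^ m ≠ 0 := (Nat.pos_of_ne_zero (by positivity)).ne'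
  have e1 : s ^ 2 ^ m = (s / 2) ^ 2 ^ m * 2 ^ 2 ^ m := by
    rw [← mul_pow, div_mul_cancel₀ s two_ne_zero]
  have e2 : s / 2 ≤ (s / 2) ^ 2 ^ m := le_self_pow₀ (by linarith) (pow_ne_zero m two_ne_zero)
  have e3 : s / 2 * (u + 1) ≤ s ^ 2 ^ m := by
    rw [e1]
    exact mul_le_mul e2 hinv2.le (by linarith) (by positivity)
  have e4 : (s / 2 * (u + 1)) ^ 2 ≤ (s ^ 2 ^ m) ^ 2 :=
    pow_le_pow_left₀ (by positivity) e3 2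
  have hs4 : 4 < s ^ 2 := by nlinarith
  have hu4 : 4 < u ^ 2 := by nlinarith
  rw [← hCu]
  nlinarith [e4, hs4, hu4,
    mul_nonneg (by linarith : (0:ℝ) ≤ s ^ 2 - 4) (by linarith : (0:ℝ) ≤ u ^ 2 - 4),
    mul_nonneg (by linarith : (0:ℝ) ≤ u - 2) (sq_nonneg s)]

/-- If |Q_{M_k}(z)| > 2 for some k ≥ 1, then there is an open
neighbourhood U of z on which the orbit escapes to infinity locally uniformly:
inf_{w ∈ U} |Q_n(w)| → ∞; in particular |Q_n(z)| → ∞. -/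
theorem stmt_10
    (c : ℕ → ℂ) (msq : ℕ → ℕ)
    (hc : ∀ k, 1 ≤ k → 4 < ‖c k‖)
    (hmsq : ∀ k, 1 ≤ k → 1 ≤ msq k)
    (hinv : ∀ k, 1 ≤ k → Real.sqrt (‖c k‖) + 1 < (2 : ℝ) ^ 2 ^ msq k)
    (M : ℕ → ℕ) (hM0 : M 0 = 0)
    (hMs : ∀ k, M (k + 1) = M k + (msq (k + 1) + 1))
    (P : ℕ → ℂ → ℂ)
    (hP1 : ∀ k, 1 ≤ k → ∀ z, P (M k) z = z ^ 2 + c k)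
    (hP2 : ∀ n, (∀ k, 1 ≤ k → M k ≠ n) → ∀ z, P n z = z ^ 2)
    (Q : ℕ → ℕ → ℂ → ℂ)
    (hQ0 : ∀ n z, Q n n z = z)
    (hQs : ∀ a n z, a ≤ n → Q a (n + 1) z = P (n + 1) (Q a n z))
    (S : ℕ → Set ℂ)
    (hS : ∀ k, S k = {z : ℂ | ‖Q 0 (M k) z‖ ≤ 2}) :
    ∀ z : ℂ, (∃ k, 1 ≤ k ∧ 2 < ‖Q 0 (M k) z‖) →
      ∃ U : Set ℂ, IsOpen U ∧ z ∈ U ∧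
        Tendsto (fun n => sInf ((fun w => ‖Q 0 n w‖) '' U))
          atTop atTop ∧
        Tendsto (fun n => ‖Q 0 n z‖) atTop atTop := by
  intro z hzex
  obtain ⟨k₀, hk₀, hz⟩ := hzex
  have hstep : ∀ n w, Q 0 (n + 1) w = P (n + 1) (Q 0 n w) :=
    fun n w => hQs 0 n w (Nat.zero_le n)
  -- M is strictly monotone
  have hMmono : StrictMono M := by
    apply strictMono_nat_of_lt_succ
    intro k
    rw [hMs k]
    omega
  -- continuity of Q 0 n
  have hcont : ∀ n, Continuous (fun w => Q 0 n w) := by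
    intro n
    induction n with
    | zero =>
      have h : (fun w => Q 0 0 w) = fun w => w := funext (hQ0 0)
      rw [h]; exact continuous_id
    | succ n ih =>
      by_cases h : ∃ k, 1 ≤ k ∧ M k = n + 1
      · obtain ⟨k, hk1, hkM⟩ := h
        have hp : ∀ x, P (n + 1) x = x ^ 2 + c k := fun x => by
          rw [← hkM]; exact hP1 k hk1 x
        have hfun : (fun w => Q 0 (n + 1) w) = fun w => (Q 0 n w) ^ 2 + c k :=
          funext fun w => by rw [hstep n w, hp]
        rw [hfun]; exact (ih.pow 2).add continuous_const
      · push_neg at h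
        have hp : ∀ x, P (n + 1) x = x ^ 2 := hP2 (n + 1) h
        have hfun : (fun w => Q 0 (n + 1) w) = fun w => (Q 0 n w) ^ 2 :=
          funext fun w => by rw [hstep n w, hp]
        rw [hfun]; exact ih.pow 2
  -- no addition step strictly inside a stretch
  have hnoadd : ∀ k n, M k ≤ n → n + 1 < M (k + 1) →
      ∀ k', 1 ≤ k' → M k' ≠ n + 1 := by
    intro k n hkn hn1 k' hk'1 hM'
    have h1 : M k < M k' := by omega
    have h2 : M k' < M (k + 1) := by omega
    have := hMmono.lt_iff_lt.mp h1
    have := hMmono.lt_iff_lt.mp h2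
    omega
  -- squaring stretch lemma
  have hstretch : ∀ (k : ℕ) (s : ℝ) (w : ℂ), 0 ≤ s →
      s ≤ ‖Q 0 (M k) w‖ →
      ∀ j, M k + j < M (k + 1) → s ^ 2 ^ j ≤ ‖Q 0 (M k + j) w‖ := by
    intro k s w hs0 hsw j
    induction j with
    | zero => intro _; simpa using hsw
    | succ j ih =>
      intro hj1
      have hj0 : M k + j < M (k + 1) := by omega
      have ihj := ih hj0
      have hsqr : Q 0 (M k + j + 1) w = (Q 0 (M k + j) w) ^ 2 := by
        rw [hstep (M k + j) w]
        exact hP2 (M k + j + 1)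
          (hnoadd k (M k + j) (Nat.le_add_right _ _) (by omega)) _
      have : M k + (j + 1) = M k + j + 1 := by omega
      rw [this, hsqr, norm_pow]
      calc s ^ 2 ^ (j + 1) = (s ^ 2 ^ j) ^ 2 := by rw [pow_succ, pow_mul]
        _ ≤ ‖Q 0 (M k + j) w‖ ^ 2 :=
          pow_le_pow_left₀ (by positivity) ihj 2
  -- set up r and U
  set r : ℝ := (2 + ‖Q 0 (M k₀) z‖) / 2 with hrdef
  have hr2 : 2 < r := by rw [hrdef]; linarith
  have hr1 : 1 < r := by linarith
  set U : Set ℂ := {w | r < ‖Q 0 (M k₀) w‖} with hUdef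
  have hUopen : IsOpen U := isOpen_lt continuous_const
    (continuous_norm.comp (hcont (M k₀)))
  have hzU : z ∈ U := by rw [hUdef]; simp only [mem_setOf_eq]; rw [hrdef]; linarith
  -- main induction: growth at the marked times
  have hmain : ∀ w, w ∈ U → ∀ j, r ^ 2 ^ j ≤ ‖Q 0 (M (k₀ + j)) w‖ := by
    intro w hw j
    induction j with
    | zero =>
      simpa using
        (le_of_lt (show r < ‖Q 0 (M k₀) w‖ from hw))
    | succ j ih =>
      set k := k₀ + j with hk
      set s : ℝ := r ^ 2 ^ j with hsdef
      have hs2 : 2 < s := lt_of_lt_of_le hr2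
        (le_self_pow₀ hr1.le (by positivity))
      set m := msq (k + 1) with hm
      have hk1 : 1 ≤ k + 1 := by omega
      have hmid : s ^ 2 ^ m ≤ ‖Q 0 (M k + m) w‖ := by
        apply hstretch k s w (by linarith) ih m
        rw [hMs k]; omega
      have hMk1 : M (k + 1) = M k + m + 1 := by rw [hMs k]; omega
      have h1 : Q 0 (M (k + 1)) w = (Q 0 (M k + m) w) ^ 2 + c (k + 1) := by
        have h2 := hstep (M k + m) w
        rw [← hMk1] at h2
        rw [h2, hP1 (k + 1) hk1]
      have hub : ‖(Q 0 (M k + m) w) ^ 2‖ - ‖c (k + 1)‖ ≤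
          ‖Q 0 (M (k + 1)) w‖ := by
        rw [h1]
        have h3 := norm_add_le ((Q 0 (M k + m) w) ^ 2 + c (k + 1))
          (-(c (k + 1)))
        rw [add_neg_cancel_right, norm_neg] at h3
        linarith
      rw [norm_pow] at hub
      have h5 : (s ^ 2 ^ m) ^ 2 ≤ ‖Q 0 (M k + m) w‖ ^ 2 :=
        pow_le_pow_left₀ (by positivity) hmid 2
      have h6 : s ^ 2 + ‖c (k + 1)‖ ≤ (s ^ 2 ^ m) ^ 2 :=
        stmt10_arith s (‖c (k + 1)‖) m hs2 (hc (k + 1) hk1)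
          (hinv (k + 1) hk1)
      have hpow : r ^ 2 ^ (j + 1) = s ^ 2 := by rw [hsdef, pow_succ, pow_mul]
      have : k₀ + (j + 1) = k + 1 := by omega
      rw [this, hpow]
      linarith
  -- full lower bound at all times
  have hge : ∀ w, w ∈ U → ∀ j n, M (k₀ + j) ≤ n →
      r ^ 2 ^ j ≤ ‖Q 0 n w‖ := by
    intro w hw j n hn
    have hex : ∃ t, n < M (k₀ + t + 1) := by
      refine ⟨n, ?_⟩
      have h9 : k₀ + n + 1 ≤ M (k₀ + n + 1) := hMmono.le_apply
      omega
    set t₁ := Nat.find hex with ht₁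
    have hlt : n < M (k₀ + t₁ + 1) := Nat.find_spec hex
    have hle : M (k₀ + t₁) ≤ n := by
      rcases Nat.eq_zero_or_pos t₁ with h0 | hpos
      · rw [h0, Nat.add_zero]
        exact le_trans (hMmono.monotone (Nat.le_add_right k₀ j)) hn
      · have hmin := Nat.find_min hex (Nat.sub_lt hpos one_pos)
        have h2 : M (k₀ + (t₁ - 1) + 1) ≤ n := not_lt.mp hmin
        have h3 : k₀ + (t₁ - 1) + 1 = k₀ + t₁ := by omega
        rwa [h3] at h2
    have hjt : j ≤ t₁ := by
      by_contra hcon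
      push_neg at hcon
      have : M (k₀ + t₁ + 1) ≤ M (k₀ + j) := hMmono.monotone (by omega)
      omega
    have hs1 : (1 : ℝ) ≤ r ^ 2 ^ t₁ := one_le_pow₀ hr1.le
    set i := n - M (k₀ + t₁) with hi
    have hni : M (k₀ + t₁) + i = n := by omega
    have hstr := hstretch (k₀ + t₁) (r ^ 2 ^ t₁) w (by positivity)
      (hmain w hw t₁) i (by omega)
    rw [hni] at hstr
    calc r ^ 2 ^ j ≤ r ^ 2 ^ t₁ :=
          pow_le_pow_right₀ hr1.le (Nat.pow_le_pow_right (by norm_num) hjt)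
      _ ≤ (r ^ 2 ^ t₁) ^ 2 ^ i := le_self_pow₀ hs1 (by positivity)
      _ ≤ _ := hstr
  -- how to get arbitrarily large bounds
  have hbig : ∀ b : ℝ, ∃ j : ℕ, b ≤ r ^ 2 ^ j := by
    intro b
    obtain ⟨j, hj⟩ := pow_unbounded_of_one_lt b hr1
    exact ⟨j, le_trans hj.le
      (pow_le_pow_right₀ hr1.le (Nat.lt_two_pow_self (n := j)).le)⟩
  refine ⟨U, hUopen, hzU, ?_, ?_⟩
  · rw [Filter.tendsto_atTop]
    intro b
    obtain ⟨j, hj⟩ := hbig b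
    filter_upwards [eventually_ge_atTop (M (k₀ + j))] with n hn
    refine le_csInf ⟨_, ⟨z, hzU, rfl⟩⟩ ?_
    rintro x ⟨w, hw, rfl⟩
    exact hj.trans (hge w hw j n hn)
  · rw [Filter.tendsto_atTop]
    intro b
    obtain ⟨j, hj⟩ := hbig b
    filter_upwards [eventually_ge_atTop (M (k₀ + j))] with n hn
    exact hj.trans (hge z hzU j n hn)
end

section
/- Let z ∈ E = ⋂_{k≥1} S_k. Then for every open neighbourhood U of z, every strictly increasing sequence (k_j) of positive integers, and every function g : U → ℂ, the sequence of maps (Q_{M_{k_j}}) restricted to U does not converge locally uniformly on U to g. (No subsequence of (Q_{M_k}) is normally convergent on any neighbourhood of a point of E; this holds because |Q_{M_k}(z)| ≤ 2 for all k while |Q'_{M_k}(z)| ≥ 2^(M_k) → ∞.) -/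
open Complex Metric Set Filter

/-- For z ∈ E, no subsequence of (Q_{M_k}) converges locally
uniformly on any neighbourhood of z. -/
theorem stmt_11
    (c : ℕ → ℂ) (msq : ℕ → ℕ)
    (hc : ∀ k, 1 ≤ k → 4 < ‖c k‖)
    (hmsq : ∀ k, 1 ≤ k → 1 ≤ msq k)
    (hinv : ∀ k, 1 ≤ k → Real.sqrt (‖c k‖) + 1 < (2 : ℝ) ^ 2 ^ msq k)
    (M : ℕ → ℕ) (hM0 : M 0 = 0)
    (hMs : ∀ k, M (k + 1) = M k + (msq (k + 1) + 1))
    (P : ℕ → ℂ → ℂ)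
    (hP1 : ∀ k, 1 ≤ k → ∀ z, P (M k) z = z ^ 2 + c k)
    (hP2 : ∀ n, (∀ k, 1 ≤ k → M k ≠ n) → ∀ z, P n z = z ^ 2)
    (Q : ℕ → ℕ → ℂ → ℂ)
    (hQ0 : ∀ n z, Q n n z = z)
    (hQs : ∀ a n z, a ≤ n → Q a (n + 1) z = P (n + 1) (Q a n z))
    (S : ℕ → Set ℂ)
    (hS : ∀ k, S k = {z : ℂ | ‖Q 0 (M k) z‖ ≤ 2})
    (E : Set ℂ) (hE : E = ⋂ k, ⋂ (_ : 1 ≤ k), S k) :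
    ∀ z ∈ E, ∀ U : Set ℂ, IsOpen U → z ∈ U →
      ∀ kseq : ℕ → ℕ, StrictMono kseq → (∀ j, 1 ≤ kseq j) →
        ∀ g : ℂ → ℂ,
          ¬ TendstoLocallyUniformlyOn (fun j => Q 0 (M (kseq j))) g atTop U := by
  intro z hzE U hU hzU kseq hks hks1 g hconv
  -- M is strictly increasing
  have hMmono : StrictMono M := strictMono_nat_of_lt_succ (fun k => by rw [hMs]; omega)
  have hMge : ∀ k, k ≤ M k := fun k => hMmono.le_apply
  -- inside a block, P squares
  have hgap : ∀ k i, 0 < i → i ≤ msq (k + 1) → ∀ w, P (M k + i) w = w ^ 2 := by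
    intro k i hi0 hile w
    apply hP2
    intro k' hk' hMk'
    have h1 : M k < M k' := by omega
    have h2 : M k' < M (k + 1) := by rw [hMs]; omega
    have e1 := hMmono.lt_iff_lt.mp h1
    have e2 := hMmono.lt_iff_lt.mp h2
    omega
  -- each step is a quadratic (with constant 0 or c k)
  have hsucc : ∀ n, ∃ a : ℂ, ∀ w, Q 0 (n + 1) w = (Q 0 n w) ^ 2 + a := by
    intro n
    by_cases h : ∃ k, 1 ≤ k ∧ M k = n + 1
    · obtain ⟨k, hk, hMk⟩ := h
      exact ⟨c k, fun w => by rw [hQs 0 n w (Nat.zero_le n), ← hMk, hP1 k hk]⟩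
    · refine ⟨0, fun w => ?_⟩
      rw [hQs 0 n w (Nat.zero_le n), hP2 (n + 1) (fun k hk hMk => h ⟨k, hk, hMk⟩), add_zero]
  -- derivative formula
  have hderiv : ∀ n w, HasDerivAt (Q 0 n)
      ((2 : ℂ) ^ n * ∏ m ∈ Finset.range n, Q 0 m w) w := by
    intro n
    induction n with
    | zero =>
        intro w
        have hid : Q 0 0 = fun w : ℂ => w := funext (hQ0 0)
        rw [hid]
        exact (hasDerivAt_id w).congr_deriv (by simp)
    | succ n ih =>
        intro w
        obtain ⟨a, ha⟩ := hsucc n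
        have hQe : Q 0 (n + 1) = fun w => (Q 0 n w) ^ 2 + a := funext ha
        rw [hQe]
        have h2 := ((ih w).pow 2).add_const a
        refine h2.congr_deriv ?_
        rw [Finset.prod_range_succ]
        push_cast
        ring
  -- values inside a block
  have hblock : ∀ k i, i ≤ msq (k + 1) → ∀ w, Q 0 (M k + i) w = (Q 0 (M k) w) ^ (2 ^ i) := by
    intro k i
    induction i with
    | zero => intro _ w; simp
    | succ i ih =>
        intro hi w
        have hi' : i ≤ msq (k + 1) := by omega
        rw [show M k + (i + 1) = (M k + i) + 1 from rfl,
          hQs 0 (M k + i) w (Nat.zero_le _), show (M k + i) + 1 = M k + (i + 1) from rfl,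
          hgap k (i + 1) (by omega) hi, ih hi' w, ← pow_mul, ← pow_succ]
  -- transition between blocks
  have htrans : ∀ k w, Q 0 (M (k + 1)) w
      = (Q 0 (M k) w) ^ (2 ^ (msq (k + 1) + 1)) + c (k + 1) := by
    intro k w
    have hM1 : M (k + 1) = (M k + msq (k + 1)) + 1 := by rw [hMs]; omega
    calc Q 0 (M (k + 1)) w = Q 0 ((M k + msq (k + 1)) + 1) w := by rw [← hM1]
      _ = P (M (k + 1)) (Q 0 (M k + msq (k + 1)) w) := by
            rw [hQs 0 _ w (Nat.zero_le _), ← hM1]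
      _ = (Q 0 (M k + msq (k + 1)) w) ^ 2 + c (k + 1) := by
            rw [hP1 (k + 1) (by omega)]
      _ = (Q 0 (M k) w) ^ (2 ^ (msq (k + 1) + 1)) + c (k + 1) := by
            rw [hblock k (msq (k + 1)) le_rfl, ← pow_mul, ← pow_succ]
  -- membership in survival sets
  have hzS : ∀ k, 1 ≤ k → ‖Q 0 (M k) z‖ ≤ 2 := by
    intro k hk
    have := hzE
    rw [hE] at this
    have h2 := mem_iInter.mp this k
    have h3 := mem_iInter.mp h2 hk
    rw [hS k] at h3
    exact h3
  -- lower bound at block starts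
  have hlow : ∀ k, 1 ≤ ‖Q 0 (M k) z‖ := by
    intro k
    set u := Q 0 (M k) z with hu
    set N := 2 ^ (msq (k + 1) + 1) with hN
    have h1 : ‖u ^ N + c (k + 1)‖ ≤ 2 := by
      rw [← htrans k z]; exact hzS (k + 1) (by omega)
    have h2 : ‖c (k + 1)‖ ≤ ‖u ^ N + c (k + 1)‖ + ‖u ^ N‖ := by
      calc ‖c (k + 1)‖ = ‖(u ^ N + c (k + 1)) - u ^ N‖ := by
            congr 1; ring
        _ ≤ ‖u ^ N + c (k + 1)‖ + ‖u ^ N‖ := norm_sub_le _ _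
        _ = _ := rfl
    have h3 : 4 < ‖c (k + 1)‖ := hc (k + 1) (by omega)
    have h4 : 2 ≤ (‖u‖) ^ N := by
      rw [← norm_pow]; linarith
    by_contra hcon
    push_neg at hcon
    have : (‖u‖) ^ N ≤ 1 := pow_le_one₀ (norm_nonneg u) hcon.le
    linarith
  -- decomposing any index
  have hdecomp : ∀ j, ∃ k i, i ≤ msq (k + 1) ∧ j = M k + i := by
    intro j
    induction j with
    | zero => exact ⟨0, 0, Nat.zero_le _, by omega⟩
    | succ j ih =>
        obtain ⟨k, i, hi, hj⟩ := ih
        rcases Nat.lt_or_ge i (msq (k + 1)) with h | h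
        · exact ⟨k, i + 1, h, by omega⟩
        · refine ⟨k + 1, 0, Nat.zero_le _, ?_⟩
          rw [hMs]; omega
  -- lower bound everywhere
  have hlow' : ∀ j, 1 ≤ ‖Q 0 j z‖ := by
    intro j
    obtain ⟨k, i, hi, rfl⟩ := hdecomp j
    rw [hblock k i hi z, norm_pow]
    exact one_le_pow₀ (hlow k)
  -- derivative lower bound
  have hDbig : ∀ n, (2 : ℝ) ^ n
      ≤ ‖(2 : ℂ) ^ n * ∏ m ∈ Finset.range n, Q 0 m z‖ := by
    intro n
    rw [norm_mul, norm_pow, norm_prod, Complex.norm_two]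
    have h1 : (1 : ℝ) ≤ ∏ m ∈ Finset.range n, ‖Q 0 m z‖ := by
      have := Finset.prod_le_prod (f := fun _ : ℕ => (1 : ℝ))
        (g := fun m => ‖Q 0 m z‖) (s := Finset.range n)
        (fun _ _ => zero_le_one) (fun m _ => hlow' m)
      simpa using this
    nlinarith [pow_nonneg (by norm_num : (0:ℝ) ≤ 2) n]
  -- now derive the contradiction
  have hdiff : ∀ j : ℕ, DifferentiableOn ℂ (Q 0 (M (kseq j))) U :=
    fun j w _ => (hderiv _ w).differentiableAt.differentiableWithinAt
  have hd := hconv.deriv (Eventually.of_forall hdiff) hU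
  have ht := hd.tendsto_at hzU
  have hnorm := ht.norm
  have hbig : Tendsto (fun j => ‖(deriv ∘ fun j => Q 0 (M (kseq j))) j z‖) atTop atTop := by
    apply tendsto_atTop_mono (f := fun j : ℕ => (2 : ℝ) ^ j)
    · intro j
      have hval : deriv (Q 0 (M (kseq j))) z
          = (2 : ℂ) ^ (M (kseq j)) * ∏ m ∈ Finset.range (M (kseq j)), Q 0 m z :=
        (hderiv _ z).deriv
      have hle : j ≤ M (kseq j) := le_trans hks.le_apply (hMge _)
      calc (2 : ℝ) ^ j ≤ (2 : ℝ) ^ (M (kseq j)) :=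
            pow_le_pow_right₀ (by norm_num) hle
        _ ≤ _ := by
            simp only [Function.comp_apply, hval]
            exact hDbig _
    · exact tendsto_pow_atTop_atTop_of_one_lt (by norm_num)
  exact not_tendsto_atTop_of_tendsto_nhds hnorm hbig
end

section
/- For every k ≥ 1, each connected component of the survival set S_k has Euclidean diameter at most 4·η^k, where η = 2^(−11/4) < 1. -/
open Complex Metric Set Filter

private lemma preconn_finite_subsingleton {s : Set ℂ} (hfin : s.Finite)
    (hs : IsPreconnected s) : s.Subsingleton := by
  intro x hx y hy
  by_contra hxy
  have hu : IsOpen ((s \ {x})ᶜ) := (hfin.subset Set.diff_subset).isClosed.isOpen_compl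
  have hv : IsOpen (({x} : Set ℂ)ᶜ) := isClosed_singleton.isOpen_compl
  have hsub : s ⊆ (s \ {x})ᶜ ∪ ({x} : Set ℂ)ᶜ := by
    intro w hw
    by_cases hwx : w = x
    · exact Or.inl (by simp [hwx])
    · exact Or.inr (by simp [hwx])
  obtain ⟨w, hws, hwu, hwv⟩ := hs _ _ hu hv hsub ⟨x, hx, by simp⟩
    ⟨y, hy, by simp [Ne.symm hxy]⟩
  exact hwv (by simpa [hws] using hwu)

private lemma keyD (m : ℕ) (c : ℂ) (hc : 4 < norm c)
    (hinv : Real.sqrt (norm c) + 1 < (2 : ℝ) ^ 2 ^ m)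
    (z : ℂ) (h : norm (z ^ 2 ^ (m + 1) + c) ≤ 2) : norm z ≤ 2 := by
  set d := 2 ^ (m + 1) with hd
  set s := Real.sqrt (norm c) with hs
  have hs0 : 0 ≤ s := Real.sqrt_nonneg _
  have hs2 : s ^ 2 = norm c := Real.sq_sqrt (by positivity)
  have hs2' : 2 < s := by
    rw [hs]
    rw [show (2:ℝ) = Real.sqrt 4 by
      rw [show (4:ℝ) = 2^2 by norm_num, Real.sqrt_sq (by norm_num)]]
    exact Real.sqrt_lt_sqrt (by norm_num) hc
  have h1 : norm z ^ d ≤ 2 + norm c := by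
    rw [← norm_pow]
    calc norm (z ^ d) = norm ((z ^ d + c) + (-c)) := by ring_nf
      _ ≤ norm (z ^ d + c) + norm (-c) := norm_add_le _ _
      _ ≤ 2 + norm c := by rw [norm_neg]; exact add_le_add_left h _
  have h2 : (2 : ℝ) + norm c ≤ (s + 1) ^ 2 := by nlinarith
  have h3 : (s + 1) ^ 2 < ((2 : ℝ) ^ 2 ^ m) ^ 2 :=
    pow_lt_pow_left₀ hinv (by positivity) (by norm_num)
  have h4 : ((2 : ℝ) ^ 2 ^ m) ^ 2 = (2 : ℝ) ^ d := by
    rw [← pow_mul, hd, pow_succ]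
  have : norm z ^ d < (2 : ℝ) ^ d := by
    calc norm z ^ d ≤ 2 + norm c := h1
      _ ≤ (s + 1) ^ 2 := h2
      _ < ((2 : ℝ) ^ 2 ^ m) ^ 2 := h3
      _ = (2 : ℝ) ^ d := h4
  exact le_of_lt (lt_of_pow_lt_pow_left₀ d (by norm_num) this)

private lemma abs_one_of_pow_eq_one {x : ℂ} {d : ℕ} (hd : d ≠ 0) (h : x ^ d = 1) :
    norm x = 1 := by
  have habs : norm x ^ d = 1 := by rw [← norm_pow, h, norm_one]
  rcases lt_trichotomy (norm x) 1 with hlt | heq | hgt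
  · exact absurd habs (by have := pow_lt_one₀ (norm_nonneg x) hlt hd; linarith)
  · exact heq
  · exact absurd habs (by have := one_lt_pow₀ hgt hd; linarith)

private lemma keyC (d : ℕ) (hd : 4 ≤ d) (c : ℂ) (hc : 4 < norm c)
    {C : Set ℂ} (hC : IsPreconnected C) (hmem : ∀ z ∈ C, norm (z ^ d + c) ≤ 2)
    {z1 z2 : ℂ} (h1 : z1 ∈ C) (h2 : z2 ∈ C) :
    dist z1 z2 ≤ (2 : ℝ) ^ (-(11 : ℝ) / 4) * dist (z1 ^ d) (z2 ^ d) := by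
  have hdne : d ≠ 0 := by omega
  have hd0 : (d : ℂ) ≠ 0 := Nat.cast_ne_zero.mpr hdne
  have hdR : (4 : ℝ) ≤ (d : ℝ) := by exact_mod_cast hd
  set η : ℝ := (2 : ℝ) ^ (-(11 : ℝ) / 4) with hη
  have hηnn : 0 ≤ η := le_of_lt (Real.rpow_pos_of_pos two_pos _)
  have hc0 : norm c ≠ 0 := by positivity
  set e : ℂ := (-c) / ((norm c : ℝ) : ℂ) with he
  have habse : norm e = 1 := by
    rw [he, norm_div, norm_neg, Complex.norm_real, Real.norm_eq_abs, abs_of_pos (by linarith),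
      div_self hc0]
  have hene : e ≠ 0 := by
    intro h; rw [h] at habse; simp at habse
  set u : ℂ → ℂ := fun z => z ^ d * (starRingEnd ℂ) e with hu
  -- real part bound
  have hre : ∀ z ∈ C, 2 < (u z).re := by
    intro z hz
    have h2' := hmem z hz
    have hkey : (-c) * (starRingEnd ℂ) e = ((norm c : ℝ) : ℂ) := by
      rw [he, map_div₀, Complex.conj_ofReal, ← mul_div_assoc, Complex.mul_conj,
        Complex.normSq_eq_norm_sq, norm_neg]
      rw [show ((norm c ^ 2 : ℝ) : ℂ) = ((norm c : ℝ) : ℂ) ^ 2 by push_cast; ring]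
      rw [sq, mul_div_assoc, div_self (by exact_mod_cast hc0), mul_one]
    have hdecomp : u z = (z ^ d + c) * (starRingEnd ℂ) e + ((norm c : ℝ) : ℂ) := by
      rw [hu, ← hkey]; ring
    have habs2 : norm ((z ^ d + c) * (starRingEnd ℂ) e) ≤ 2 := by
      rw [norm_mul, Complex.norm_conj, habse, mul_one]; exact h2'
    have hrele : -(2 : ℝ) ≤ ((z ^ d + c) * (starRingEnd ℂ) e).re := by
      have h3 := Complex.abs_re_le_norm ((z ^ d + c) * (starRingEnd ℂ) e)
      have h4 := abs_le.mp (h3.trans habs2)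
      exact h4.1
    rw [hdecomp, Complex.add_re, Complex.ofReal_re]
    linarith
  -- the root function
  set g0 : ℂ → ℂ := fun w => Complex.exp (Complex.log w / (d : ℂ)) with hg0
  have hg0pow : ∀ w : ℂ, w ≠ 0 → g0 w ^ d = w := by
    intro w hw
    rw [hg0]; dsimp only
    rw [← Complex.exp_nat_mul, mul_comm, div_mul_cancel₀ _ hd0, Complex.exp_log hw]
  have hg0abs : ∀ w : ℂ, norm (g0 w) = Real.exp (Real.log (norm w) / (d : ℝ)) := by
    intro w
    rw [hg0]; dsimp only
    rw [Complex.norm_exp, Complex.div_natCast_re, Complex.log_re]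
  -- Lipschitz bound on the halfplane
  set H : Set ℂ := {w : ℂ | 2 < w.re} with hH
  have hmemH : ∀ w : ℂ, w ∈ H ↔ 2 < w.re := fun w => Iff.rfl
  have hwabs : ∀ w : ℂ, w ∈ H → 2 < norm w := by
    intro w hw
    exact lt_of_lt_of_le ((hmemH w).mp hw) (Complex.re_le_norm w)
  have hderiv : ∀ w ∈ H, HasDerivWithinAt g0 (g0 w * (w⁻¹ / (d : ℂ))) H w := by
    intro w hw
    have hsp : w ∈ Complex.slitPlane :=
      Complex.mem_slitPlane_iff.mpr (Or.inl (by have := (hmemH w).mp hw; linarith))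
    have h1' : HasDerivAt (fun w => Complex.log w / (d : ℂ)) (w⁻¹ / (d : ℂ)) w :=
      (Complex.hasDerivAt_log hsp).div_const _
    exact h1'.cexp.hasDerivWithinAt
  have hbound : ∀ w ∈ H, ‖g0 w * (w⁻¹ / (d : ℂ))‖ ≤ η := by
    intro w hw
    have hA : 2 < norm w := hwabs w hw
    have hApos : 0 < norm w := by linarith
    have hgw : norm (g0 w) = norm w ^ ((1 : ℝ) / d) := by
      rw [hg0abs, Real.rpow_def_of_pos hApos, mul_one_div]
    have hexpand : ‖g0 w * (w⁻¹ / (d : ℂ))‖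
        = norm w ^ ((1 : ℝ) / d) * (norm w)⁻¹ / (d : ℝ) := by
      rw [norm_mul, norm_div, norm_inv, Complex.norm_natCast, hgw,
        mul_div_assoc]
    rw [hexpand]
    have hpow : norm w ^ ((1 : ℝ) / d) * (norm w)⁻¹
        = norm w ^ ((1 : ℝ) / d - 1) := by
      rw [Real.rpow_sub hApos, Real.rpow_one]
      exact (div_eq_mul_inv _ _).symm
    rw [hpow]
    have hexp1 : (1 : ℝ) / d - 1 ≤ 0 := by
      have : (1 : ℝ) / d ≤ 1 := by
        rw [div_le_one (by linarith)]; linarith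
      linarith
    have hstep1 : norm w ^ ((1 : ℝ) / d - 1) ≤ (2 : ℝ) ^ ((1 : ℝ) / d - 1) :=
      Real.rpow_le_rpow_of_nonpos two_pos hA.le hexp1
    have hstep2 : (2 : ℝ) ^ ((1 : ℝ) / d - 1) ≤ (2 : ℝ) ^ ((1 : ℝ) / 4 - 1) := by
      apply Real.rpow_le_rpow_of_exponent_le one_le_two
      have : (1 : ℝ) / d ≤ 1 / 4 := one_div_le_one_div_of_le (by norm_num) hdR
      linarith
    have hstep3 : norm w ^ ((1 : ℝ) / d - 1) / (d : ℝ)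
        ≤ (2 : ℝ) ^ ((1 : ℝ) / 4 - 1) / 4 := by
      apply div_le_div₀ (by positivity) (hstep1.trans hstep2) (by norm_num) hdR
    refine hstep3.trans (le_of_eq ?_)
    rw [hη]
    rw [show (4 : ℝ) = (2 : ℝ) ^ (2 : ℝ) by
      rw [show (2 : ℝ) = ((2 : ℕ) : ℝ) by norm_num, Real.rpow_natCast]; norm_num]
    rw [← Real.rpow_sub two_pos]
    norm_num
  have hconv : Convex ℝ H := convex_halfSpace_re_gt 2
  have hlip : ∀ w1 ∈ H, ∀ w2 ∈ H,
      norm (g0 w2 - g0 w1) ≤ η * norm (w2 - w1) := by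
    intro w1 hw1 w2 hw2
    have := Convex.norm_image_sub_le_of_norm_hasDerivWithin_le
      (f' := fun w => g0 w * (w⁻¹ / (d : ℂ))) hderiv hbound hconv hw1 hw2
    simpa using this
  -- the branch r, G, φ
  set r : ℂ := g0 e with hr
  have hrpow : r ^ d = e := hg0pow e hene
  have hrabs : norm r = 1 := by
    rw [hr, hg0abs, habse, Real.log_one, zero_div, Real.exp_zero]
  have hune : ∀ z ∈ C, u z ≠ 0 := by
    intro z hz h0
    have := hre z hz
    rw [h0] at this
    simp at this
    linarith
  have hzne : ∀ z ∈ C, z ≠ 0 := by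
    intro z hz h0
    apply hune z hz
    rw [hu]; dsimp only; rw [h0, zero_pow hdne, zero_mul]
  have heconj : e * (starRingEnd ℂ) e = 1 := by
    rw [Complex.mul_conj, Complex.normSq_eq_norm_sq, habse]; norm_num
  set G : ℂ → ℂ := fun z => r * g0 (u z) with hG
  have hGpow : ∀ z ∈ C, G z ^ d = z ^ d := by
    intro z hz
    rw [hG]; dsimp only
    rw [mul_pow, hrpow, hg0pow _ (hune z hz), hu]; dsimp only
    calc e * (z ^ d * (starRingEnd ℂ) e) = z ^ d * (e * (starRingEnd ℂ) e) := by ring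
      _ = z ^ d := by rw [heconj, mul_one]
  set φ : ℂ → ℂ := fun z => G z / z with hφ
  have hφpow : ∀ z ∈ C, φ z ^ d = 1 := by
    intro z hz
    rw [hφ]; dsimp only
    rw [div_pow, hGpow z hz, div_self (pow_ne_zero _ (hzne z hz))]
  have hφcont : ContinuousOn φ C := by
    intro z hz
    apply ContinuousAt.continuousWithinAt
    have hcu : ContinuousAt u z := ((continuous_pow d).mul continuous_const).continuousAt
    have hsp : u z ∈ Complex.slitPlane :=
      Complex.mem_slitPlane_iff.mpr (Or.inl (by have := hre z hz; linarith))
    have hlog : ContinuousAt (fun z => Complex.log (u z)) z :=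
      (continuousAt_clog hsp).comp hcu
    have hGc : ContinuousAt G z :=
      continuousAt_const.mul ((Complex.continuous_exp.continuousAt).comp (hlog.div_const _))
    exact hGc.div continuousAt_id (hzne z hz)
  -- φ is constant on C
  have hTfin : Set.Finite {x : ℂ | x ^ d = 1} := by
    apply Set.Finite.subset (Polynomial.nthRoots d (1 : ℂ)).toFinset.finite_toSet
    intro x hx
    simp only [Multiset.mem_toFinset, Finset.coe_sort_coe, Finset.mem_coe]
    rw [Polynomial.mem_nthRoots (by omega : 0 < d)]
    exact hx
  have himg : (φ '' C).Subsingleton := by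
    apply preconn_finite_subsingleton
    · apply hTfin.subset
      rintro _ ⟨z, hz, rfl⟩
      exact hφpow z hz
    · exact hC.image φ hφcont
  have hφeq : φ z1 = φ z2 := himg ⟨z1, h1, rfl⟩ ⟨z2, h2, rfl⟩
  have hφabs : norm (φ z1) = 1 := abs_one_of_pow_eq_one hdne (hφpow z1 h1)
  have hGz : ∀ z ∈ C, G z = φ z * z := by
    intro z hz
    rw [hφ]; dsimp only
    rw [div_mul_cancel₀ _ (hzne z hz)]
  have hsubG : G z1 - G z2 = φ z1 * (z1 - z2) := by
    rw [hGz z1 h1, hGz z2 h2, ← hφeq]; ring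
  have hdiff : norm (G z1 - G z2) = norm (z1 - z2) := by
    rw [hsubG, norm_mul, hφabs, one_mul]
  have hGdiff : norm (G z1 - G z2) ≤ η * norm (u z1 - u z2) := by
    have hl := hlip (u z2) (hre z2 h2) (u z1) (hre z1 h1)
    calc norm (G z1 - G z2)
        = norm r * norm (g0 (u z1) - g0 (u z2)) := by
          rw [hG]; dsimp only; rw [← mul_sub, norm_mul]
      _ = norm (g0 (u z1) - g0 (u z2)) := by rw [hrabs, one_mul]
      _ ≤ η * norm (u z1 - u z2) := hl
  have huu : norm (u z1 - u z2) = norm (z1 ^ d - z2 ^ d) := by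
    rw [hu]; dsimp only
    rw [← sub_mul, norm_mul, Complex.norm_conj, habse, mul_one]
  rw [Complex.dist_eq, Complex.dist_eq]
  calc norm (z1 - z2) = norm (G z1 - G z2) := hdiff.symm
    _ ≤ η * norm (u z1 - u z2) := hGdiff
    _ = η * norm (z1 ^ d - z2 ^ d) := by rw [huu]

/-- For every k ≥ 1, each connected component of S_k has Euclidean
diameter at most 4·η^k, where η = 2^(−11/4) < 1. -/
theorem stmt_13
    (c : ℕ → ℂ) (msq : ℕ → ℕ)
    (hc : ∀ k, 1 ≤ k → 4 < ‖c k‖)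
    (hmsq : ∀ k, 1 ≤ k → 1 ≤ msq k)
    (hinv : ∀ k, 1 ≤ k → Real.sqrt (‖c k‖) + 1 < (2 : ℝ) ^ 2 ^ msq k)
    (M : ℕ → ℕ) (hM0 : M 0 = 0)
    (hMs : ∀ k, M (k + 1) = M k + (msq (k + 1) + 1))
    (P : ℕ → ℂ → ℂ)
    (hP1 : ∀ k, 1 ≤ k → ∀ z, P (M k) z = z ^ 2 + c k)
    (hP2 : ∀ n, (∀ k, 1 ≤ k → M k ≠ n) → ∀ z, P n z = z ^ 2)
    (Q : ℕ → ℕ → ℂ → ℂ)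
    (hQ0 : ∀ n z, Q n n z = z)
    (hQs : ∀ a n z, a ≤ n → Q a (n + 1) z = P (n + 1) (Q a n z))
    (S : ℕ → Set ℂ)
    (hS : ∀ k, S k = {z : ℂ | ‖Q 0 (M k) z‖ ≤ 2}) :
    ∀ k, 1 ≤ k → ∀ z ∈ S k,
      Metric.diam (connectedComponentIn (S k) z)
        ≤ 4 * ((2 : ℝ) ^ (-(11 : ℝ) / 4)) ^ k := by
  have hηnn : (0:ℝ) ≤ (2 : ℝ) ^ (-(11 : ℝ) / 4) := le_of_lt (Real.rpow_pos_of_pos two_pos _)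
  have hMmono : StrictMono M := strictMono_nat_of_lt_succ (fun n => by rw [hMs]; omega)
  -- composition
  have hQcomp : ∀ a b, a ≤ b → ∀ n, b ≤ n → ∀ z, Q b n (Q a b z) = Q a n z := by
    intro a b hab n hbn z
    induction n, hbn using Nat.le_induction with
    | base => rw [hQ0]
    | succ n hn ih =>
        rw [hQs b n _ hn, ih, ← hQs a n z (hab.trans hn)]
  -- block formula
  have hQblock : ∀ j z, Q (M j) (M (j + 1)) z = z ^ 2 ^ (msq (j + 1) + 1) + c (j + 1) := by
    intro j z
    have hiter : ∀ i, i ≤ msq (j + 1) → Q (M j) (M j + i) z = z ^ 2 ^ i := by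
      intro i
      induction i with
      | zero => intro _; simpa using hQ0 (M j) z
      | succ i ih =>
          intro hle
          have hle' : i ≤ msq (j + 1) := by omega
          have hnonhit : ∀ l, 1 ≤ l → M l ≠ M j + i + 1 := by
            intro l hl
            rcases le_or_gt l j with h | h
            · have := hMmono.monotone h
              omega
            · have h1 : M (j + 1) ≤ M l := hMmono.monotone h
              have h2 : M (j + 1) = M j + (msq (j + 1) + 1) := hMs j
              omega
          rw [show M j + (i + 1) = (M j + i) + 1 from rfl,
            hQs (M j) (M j + i) z (Nat.le_add_right _ _), ih hle',
            hP2 (M j + i + 1) hnonhit, ← pow_mul, ← pow_succ]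
    have h1 : Q (M j) (M j + msq (j + 1)) z = z ^ 2 ^ msq (j + 1) := hiter _ le_rfl
    have h2 : M (j + 1) = (M j + msq (j + 1)) + 1 := by rw [hMs]; omega
    rw [h2, hQs (M j) _ z (Nat.le_add_right _ _), h1, ← h2, hP1 (j + 1) (by omega),
      ← pow_mul, ← pow_succ]
  -- tail bound
  have htail : ∀ k, 1 ≤ k → ∀ j v, norm (Q (M j) (M (j + k)) v) ≤ 2 →
      norm v ≤ 2 := by
    intro k hk
    induction k, hk using Nat.le_induction with
    | base =>
        intro j v h
        rw [hQblock] at h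
        exact keyD (msq (j + 1)) (c (j + 1)) (hc _ (by omega)) (hinv _ (by omega)) v h
    | succ k hk ih =>
        intro j v h
        have heq : (j + 1) + k = j + (k + 1) := by omega
        have hco : Q (M (j + 1)) (M ((j + 1) + k)) (Q (M j) (M (j + 1)) v)
            = Q (M j) (M ((j + 1) + k)) v :=
          hQcomp _ _ (hMmono.monotone (by omega)) _ (hMmono.monotone (by omega)) v
        have h' : norm (Q (M (j + 1)) (M ((j + 1) + k)) (Q (M j) (M (j + 1)) v)) ≤ 2 := by
          rw [hco, heq]; exact h
        have h2 := ih (j + 1) _ h'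
        rw [hQblock] at h2
        exact keyD (msq (j + 1)) (c (j + 1)) (hc _ (by omega)) (hinv _ (by omega)) v h2
  -- main induction
  have hmain : ∀ k, 1 ≤ k → ∀ j (C : Set ℂ), IsPreconnected C →
      (∀ w ∈ C, norm (Q (M j) (M (j + k)) w) ≤ 2) →
      ∀ z1 ∈ C, ∀ z2 ∈ C, dist z1 z2 ≤ 4 * ((2 : ℝ) ^ (-(11 : ℝ) / 4)) ^ k := by
    intro k hk
    induction k, hk using Nat.le_induction with
    | base =>
        intro j C hC hmem z1 hz1 z2 hz2
        have hd4 : 4 ≤ 2 ^ (msq (j + 1) + 1) := by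
          have := hmsq (j + 1) (by omega)
          calc 4 = 2 ^ 2 := by norm_num
            _ ≤ 2 ^ (msq (j + 1) + 1) := Nat.pow_le_pow_right (by norm_num) (by omega)
        have hmem' : ∀ w ∈ C, norm (w ^ 2 ^ (msq (j + 1) + 1) + c (j + 1)) ≤ 2 := by
          intro w hw
          rw [← hQblock]
          exact hmem w hw
        have key := keyC _ hd4 (c (j + 1)) (hc _ (by omega)) hC hmem' hz1 hz2
        have e1 : dist (z1 ^ 2 ^ (msq (j + 1) + 1)) (-(c (j + 1))) ≤ 2 := by
          rw [Complex.dist_eq, sub_neg_eq_add]; exact hmem' z1 hz1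
        have e2 : dist (z2 ^ 2 ^ (msq (j + 1) + 1)) (-(c (j + 1))) ≤ 2 := by
          rw [Complex.dist_eq, sub_neg_eq_add]; exact hmem' z2 hz2
        have e3 : dist (z1 ^ 2 ^ (msq (j + 1) + 1)) (z2 ^ 2 ^ (msq (j + 1) + 1)) ≤ 4 := by
          calc dist (z1 ^ 2 ^ (msq (j + 1) + 1)) (z2 ^ 2 ^ (msq (j + 1) + 1))
              ≤ dist (z1 ^ 2 ^ (msq (j + 1) + 1)) (-(c (j + 1)))
                + dist (-(c (j + 1))) (z2 ^ 2 ^ (msq (j + 1) + 1)) := dist_triangle _ _ _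
            _ ≤ 2 + 2 := by
                refine add_le_add e1 ?_
                rw [dist_comm]; exact e2
            _ = 4 := by norm_num
        calc dist z1 z2 ≤ (2 : ℝ) ^ (-(11 : ℝ) / 4)
              * dist (z1 ^ 2 ^ (msq (j + 1) + 1)) (z2 ^ 2 ^ (msq (j + 1) + 1)) := key
          _ ≤ (2 : ℝ) ^ (-(11 : ℝ) / 4) * 4 := by
              exact mul_le_mul_of_nonneg_left e3 hηnn
          _ = 4 * ((2 : ℝ) ^ (-(11 : ℝ) / 4)) ^ 1 := by ring
    | succ k hk ih =>
        intro j C hC hmem z1 hz1 z2 hz2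
        set D := 2 ^ (msq (j + 1) + 1) with hD
        have hd4 : 4 ≤ D := by
          have := hmsq (j + 1) (by omega)
          calc 4 = 2 ^ 2 := by norm_num
            _ ≤ D := Nat.pow_le_pow_right (by norm_num) (by omega)
        set f : ℂ → ℂ := fun w => w ^ D + c (j + 1) with hf
        have hfQ : ∀ w, f w = Q (M j) (M (j + 1)) w := fun w => (hQblock j w).symm
        have hfc : Continuous f := (continuous_pow D).add continuous_const
        have hC' : IsPreconnected (f '' C) := hC.image f hfc.continuousOn
        have heq : (j + 1) + k = j + (k + 1) := by omega
        have hmem'' : ∀ w' ∈ f '' C, norm (Q (M (j + 1)) (M ((j + 1) + k)) w') ≤ 2 := by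
          rintro _ ⟨w, hw, rfl⟩
          rw [hfQ, hQcomp (M j) (M (j + 1)) (hMmono.monotone (by omega)) (M ((j + 1) + k))
            (hMmono.monotone (by omega)), heq]
          exact hmem w hw
        have hheadC : ∀ w ∈ C, norm (w ^ D + c (j + 1)) ≤ 2 := by
          intro w hw
          have h5 : norm (Q (M (j + 1)) (M ((j + 1) + k)) (f w)) ≤ 2 :=
            hmem'' _ ⟨w, hw, rfl⟩
          exact htail k hk (j + 1) (f w) h5
        have key := keyC D hd4 (c (j + 1)) (hc _ (by omega)) hC hheadC hz1 hz2
        have hdist : dist (z1 ^ D) (z2 ^ D) = dist (f z1) (f z2) := by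
          rw [hf]; dsimp only; rw [dist_add_right]
        have IH := ih (j + 1) (f '' C) hC' hmem'' (f z1) ⟨z1, hz1, rfl⟩ (f z2) ⟨z2, hz2, rfl⟩
        calc dist z1 z2 ≤ (2 : ℝ) ^ (-(11 : ℝ) / 4) * dist (z1 ^ D) (z2 ^ D) := key
          _ = (2 : ℝ) ^ (-(11 : ℝ) / 4) * dist (f z1) (f z2) := by rw [hdist]
          _ ≤ (2 : ℝ) ^ (-(11 : ℝ) / 4) * (4 * ((2 : ℝ) ^ (-(11 : ℝ) / 4)) ^ k) :=
              mul_le_mul_of_nonneg_left IH hηnn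
          _ = 4 * ((2 : ℝ) ^ (-(11 : ℝ) / 4)) ^ (k + 1) := by ring
  -- conclusion
  intro k hk z hz
  apply Metric.diam_le_of_forall_dist_le (by positivity)
  intro x hx y hy
  refine hmain k hk 0 _ isPreconnected_connectedComponentIn ?_ x hx y hy
  intro w hw
  have hw' := connectedComponentIn_subset (S k) z hw
  rw [hS k] at hw'
  have : Q (M 0) (M (0 + k)) w = Q 0 (M k) w := by rw [hM0, Nat.zero_add]
  rw [this]
  exact hw'
end

section
/- For every m ≥ 0, the Hausdorff dimension of the m-th iterated Julia set J_m = Q_m(E), where E = ⋂_{k≥1} S_k, satisfies dim_H(Q_m(E)) ≤ 1. In particular dim_H(E) ≤ 1. -/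
open Complex Metric Set Filter MeasureTheory

noncomputable def Complex.abs : AbsoluteValue ℂ ℝ :=
  IsAbsoluteValue.toAbsoluteValue (norm : ℂ → ℝ)

lemma Complex.norm_eq_abs (z : ℂ) : ‖z‖ = Complex.abs z := rfl

lemma Complex.abs_natCast (n : ℕ) : Complex.abs (n : ℂ) = n := by
  simp [← Complex.norm_eq_abs]

noncomputable def rootBranch (c : ℂ) (D : ℕ) (b : ℕ) (u : ℂ) : ℂ :=
  Complex.exp (2 * Real.pi * Complex.I / D) ^ b *
    Complex.exp ((Complex.log (-c) + Complex.log (1 - u / c)) / D)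

lemma rb_basic {c u : ℂ} (hc : 4 < Complex.abs c) (hu : Complex.abs u ≤ 2) :
    Complex.abs (u / c) ≤ 1/2 ∧ (1/2 : ℝ) ≤ Complex.abs (1 - u / c) ∧
      (1 - u / c) ∈ Complex.slitPlane ∧ (1 - u/c) ≠ 0 ∧ c ≠ 0 := by
  have hc0 : c ≠ 0 := by
    intro h; rw [h] at hc; simp at hc; linarith
  have h1 : Complex.abs (u / c) ≤ 1/2 := by
    rw [map_div₀, div_le_iff₀ (by linarith)]
    nlinarith
  have h2 : (1/2 : ℝ) ≤ Complex.abs (1 - u / c) := by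
    have := norm_sub_norm_le (1 : ℂ) (u/c)
    simp only [Complex.norm_eq_abs, map_one] at this
    linarith
  refine ⟨h1, h2, ?_, ?_, hc0⟩
  · left
    have hre : (u/c).re ≤ 1/2 := le_trans (Complex.re_le_norm _) h1
    simp only [Complex.sub_re, Complex.one_re]
    linarith
  · intro h
    rw [h] at h2; simp at h2; linarith

lemma rb_pow {c u : ℂ} {D : ℕ} (hc : 4 < Complex.abs c) (hD : 4 ≤ D)
    (hu : Complex.abs u ≤ 2) (b : ℕ) :
    (rootBranch c D b u) ^ D = u - c := by
  obtain ⟨h1, h2, h3, h4, hc0⟩ := rb_basic hc hu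
  have hD0 : (D : ℕ) ≠ 0 := by omega
  have hζ : Complex.exp (2 * Real.pi * Complex.I / D) ^ D = 1 :=
    (Complex.isPrimitiveRoot_exp D hD0).pow_eq_one
  have hh : Complex.exp ((Complex.log (-c) + Complex.log (1 - u / c)) / D) ^ D
      = u - c := by
    rw [← Complex.exp_nat_mul, mul_div_cancel₀ _ (by exact_mod_cast hD0 : (D:ℂ) ≠ 0),
      Complex.exp_add, Complex.exp_log (by simpa using hc0), Complex.exp_log h4]
    field_simp
    ring
  calc (rootBranch c D b u) ^ D
      = (Complex.exp (2 * Real.pi * Complex.I / D) ^ D) ^ b *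
        Complex.exp ((Complex.log (-c) + Complex.log (1 - u / c)) / D) ^ D := by
        rw [rootBranch, mul_pow, ← pow_mul, ← pow_mul, mul_comm b D]
    _ = u - c := by rw [hζ, one_pow, one_mul, hh]

lemma rb_abs {c u : ℂ} {D : ℕ} (hc : 4 < Complex.abs c) (hD : 4 ≤ D)
    (h2D : Complex.abs c + 2 ≤ 2 ^ D) (hu : Complex.abs u ≤ 2) (b : ℕ) :
    Complex.abs (rootBranch c D b u) ≤ 2 := by
  obtain ⟨h1, h2, h3, h4, hc0⟩ := rb_basic hc hu
  have hsub : Complex.abs (u - c) ≤ 2 ^ D := by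
    calc Complex.abs (u - c) ≤ Complex.abs u + Complex.abs c := by
          simpa [sub_eq_add_neg] using Complex.abs.add_le u (-c)
      _ ≤ 2 ^ D := by linarith
  have hpow : (Complex.abs (rootBranch c D b u)) ^ D = Complex.abs (u - c) := by
    rw [← map_pow, rb_pow hc hD hu]
  have habs0 : 0 ≤ Complex.abs (rootBranch c D b u) := Complex.abs.nonneg _
  by_contra hlt
  push_neg at hlt
  have : (2:ℝ) ^ D < (Complex.abs (rootBranch c D b u)) ^ D :=
    pow_lt_pow_left₀ hlt (by norm_num) (by omega)
  rw [hpow] at this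
  linarith

lemma rb_surj {c u w : ℂ} {D : ℕ} (hc : 4 < Complex.abs c) (hD : 4 ≤ D)
    (hu : Complex.abs u ≤ 2) (hw : w ^ D = u - c) :
    ∃ b < D, rootBranch c D b u = w := by
  obtain ⟨h1, h2, h3, h4, hc0⟩ := rb_basic hc hu
  have hD0 : (D : ℕ) ≠ 0 := by omega
  haveI : NeZero D := ⟨hD0⟩
  have huc : u - c ≠ 0 := by
    intro h
    have : u = c := by linear_combination h
    rw [this] at hu; linarith
  have hr0 : rootBranch c D 0 u ≠ 0 := by
    rw [rootBranch, pow_zero, one_mul]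
    exact Complex.exp_ne_zero _
  have hq : (w / rootBranch c D 0 u) ^ D = 1 := by
    rw [div_pow, hw, rb_pow hc hD hu 0, div_self huc]
  obtain ⟨i, hi, hie⟩ :=
    (Complex.isPrimitiveRoot_exp D hD0).eq_pow_of_pow_eq_one hq
  refine ⟨i, hi, ?_⟩
  have : rootBranch c D i u =
      Complex.exp (2 * Real.pi * Complex.I / D) ^ i * rootBranch c D 0 u := by
    rw [rootBranch, rootBranch, pow_zero, one_mul]
  rw [this, hie, div_mul_cancel₀ _ hr0]

lemma rb_deriv {c u : ℂ} {D : ℕ} (hc : 4 < Complex.abs c) (hD : 4 ≤ D)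
    (hu : Complex.abs u ≤ 2) (b : ℕ) :
    HasDerivAt (rootBranch c D b)
      (rootBranch c D b u * ((1 - u / c)⁻¹ * -(1 / c) / D)) u := by
  obtain ⟨h1, h2, h3, h4, hc0⟩ := rb_basic hc hu
  have d1 : HasDerivAt (fun u : ℂ => 1 - u / c) (-(1 / c)) u := by
    simpa using ((hasDerivAt_id u).div_const c).const_sub 1
  have d2 : HasDerivAt (fun u : ℂ => Complex.log (1 - u / c))
      ((1 - u / c)⁻¹ * -(1 / c)) u :=
    by have := (Complex.hasDerivAt_log h3).comp u d1; exact this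
  have d3 : HasDerivAt
      (fun u : ℂ => (Complex.log (-c) + Complex.log (1 - u / c)) / D)
      ((1 - u / c)⁻¹ * -(1 / c) / D) u :=
    (d2.const_add _).div_const _
  have d4 := (d3.cexp).const_mul (Complex.exp (2 * Real.pi * Complex.I / D) ^ b)
  refine d4.congr_deriv ?_
  rw [rootBranch]; ring

lemma rb_lip {c : ℂ} {D : ℕ} (hc : 4 < Complex.abs c) (hD : 4 ≤ D)
    (h2D : Complex.abs c + 2 ≤ 2 ^ D) (b : ℕ) :
    LipschitzOnWith (D : NNReal)⁻¹ (rootBranch c D b) (closedBall (0:ℂ) 2) := by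
  have hD0 : (0:ℝ) < D := by positivity
  apply (convex_closedBall (0:ℂ) 2).lipschitzOnWith_of_nnnorm_hasFDerivWithin_le
    (f' := fun x => (ContinuousLinearMap.smulRight (1 : ℂ →L[ℂ] ℂ)
      (rootBranch c D b x * ((1 - x / c)⁻¹ * -(1 / c) / D))).restrictScalars ℝ)
  · intro x hx
    have hxa : Complex.abs x ≤ 2 := by
      simpa [Complex.norm_eq_abs] using mem_closedBall_zero_iff.mp hx
    exact (((rb_deriv hc hD hxa b).hasFDerivAt).restrictScalars ℝ).hasFDerivWithinAt
  · intro x hx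
    have hxa : Complex.abs x ≤ 2 := by
      simpa [Complex.norm_eq_abs] using mem_closedBall_zero_iff.mp hx
    obtain ⟨h1, h2, h3, h4, hc0⟩ := rb_basic hc hxa
    rw [← NNReal.coe_le_coe, coe_nnnorm, ContinuousLinearMap.norm_restrictScalars,
      ContinuousLinearMap.norm_smulRight_apply, norm_one, one_mul]
    push_cast
    have hrb : Complex.abs (rootBranch c D b x) ≤ 2 := rb_abs hc hD h2D hxa b
    have hinv1 : Complex.abs (1 - x / c)⁻¹ ≤ 2 := by
      rw [map_inv₀]
      rw [inv_le_comm₀ (by linarith) (by norm_num)]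
      linarith
    have hinvc : Complex.abs (1 / c) ≤ 1/4 := by
      rw [one_div, map_inv₀, inv_le_comm₀ (by linarith) (by norm_num)]
      linarith
    have hnorm : ‖rootBranch c D b x * ((1 - x / c)⁻¹ * -(1 / c) / D)‖
        = Complex.abs (rootBranch c D b x) *
          (Complex.abs ((1 - x / c)⁻¹) * Complex.abs (1 / c)) * (D:ℝ)⁻¹ := by
      simp only [Complex.norm_eq_abs, map_mul, map_div₀, map_neg_eq_map,
        map_inv₀, map_one, Complex.abs_natCast, div_eq_mul_inv]
      ring
    rw [hnorm]
    have h1a : Complex.abs (rootBranch c D b x) *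
        (Complex.abs ((1 - x / c)⁻¹) * Complex.abs (1 / c)) ≤ 1 := by
      have n2 := Complex.abs.nonneg ((1 - x/c)⁻¹)
      have n3 := Complex.abs.nonneg (1/c)
      have hb : Complex.abs ((1 - x / c)⁻¹) * Complex.abs (1 / c) ≤ 2 * (1/4) :=
        mul_le_mul hinv1 hinvc n3 (by norm_num)
      calc Complex.abs (rootBranch c D b x) *
            (Complex.abs ((1 - x / c)⁻¹) * Complex.abs (1 / c))
          ≤ 2 * (2 * (1/4)) := mul_le_mul hrb hb (by positivity) (by norm_num)
        _ = 1 := by norm_num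
    calc Complex.abs (rootBranch c D b x) *
          (Complex.abs ((1 - x / c)⁻¹) * Complex.abs (1 / c)) * (D:ℝ)⁻¹
        ≤ 1 * (D:ℝ)⁻¹ := mul_le_mul_of_nonneg_right h1a (by positivity)
      _ = (D:ℝ)⁻¹ := one_mul _


noncomputable def compG (g : ℕ → ℕ → ℂ → ℂ) : ℕ → (ℕ → ℕ) → ℂ → ℂ
  | 0, _, z => z
  | (k+1), b, z => compG g k b (g (k+1) (b k) z)

lemma compG_congr (g : ℕ → ℕ → ℂ → ℂ) :
    ∀ (k : ℕ) (b b' : ℕ → ℕ), (∀ j < k, b j = b' j) →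
      ∀ z, compG g k b z = compG g k b' z := by
  intro k
  induction k with
  | zero => intro b b' _ z; rfl
  | succ k ih =>
    intro b b' h z
    show compG g k b _ = compG g k b' _
    rw [h k (by omega), ih b b' (fun j hj => h j (by omega))]

lemma compG_mapsTo (g : ℕ → ℕ → ℂ → ℂ)
    (hmaps : ∀ k b, MapsTo (g (k+1) b) (closedBall (0:ℂ) 2) (closedBall (0:ℂ) 2)) :
    ∀ (k : ℕ) (b : ℕ → ℕ),
      MapsTo (compG g k b) (closedBall (0:ℂ) 2) (closedBall (0:ℂ) 2) := by
  intro k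
  induction k with
  | zero => intro b z hz; exact hz
  | succ k ih => intro b z hz; exact ih b (hmaps k (b k) hz)

lemma compG_lip (g : ℕ → ℕ → ℂ → ℂ) (K : ℕ → NNReal)
    (hmaps : ∀ k b, MapsTo (g (k+1) b) (closedBall (0:ℂ) 2) (closedBall (0:ℂ) 2))
    (hlip : ∀ k b, LipschitzOnWith (K (k+1)) (g (k+1) b) (closedBall (0:ℂ) 2)) :
    ∀ (k : ℕ) (b : ℕ → ℕ),
      LipschitzOnWith (∏ j ∈ Finset.range k, K (j+1)) (compG g k b)
        (closedBall (0:ℂ) 2) := by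
  intro k
  induction k with
  | zero =>
    intro b
    simp only [Finset.range_zero, Finset.prod_empty]
    exact LipschitzWith.id.lipschitzOnWith
  | succ k ih =>
    intro b
    have h2 := (ih b).comp (hlip k (b k)) (hmaps k (b k))
    have : compG g (k+1) b = compG g k b ∘ g (k + 1) (b k) := rfl
    rw [this, Finset.prod_range_succ]
    exact h2

lemma lipOn_ediam {K : NNReal} {f : ℂ → ℂ} {s : Set ℂ}
    (h : LipschitzOnWith K f s) :
    EMetric.diam (f '' s) ≤ (K : ENNReal) * EMetric.diam s := by
  refine ediam_image_le_iff.mpr ?_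
  intro x hx y hy
  exact le_trans (h hx hy)
    (mul_le_mul_right (EMetric.edist_le_diam_of_mem hx hy) _)

lemma ediam_ball2 : EMetric.diam (closedBall (0:ℂ) 2) ≤ 4 := by
  apply EMetric.diam_le
  intro x hx y hy
  rw [edist_dist]
  have h1 : dist x y ≤ 4 := by
    have := mem_closedBall.mp hx
    have := mem_closedBall.mp hy
    calc dist x y ≤ dist x 0 + dist 0 y := dist_triangle _ _ _
      _ ≤ 2 + 2 := by rw [dist_comm (0:ℂ) y]; gcongr
      _ = 4 := by norm_num
  calc ENNReal.ofReal (dist x y) ≤ ENNReal.ofReal 4 := ENNReal.ofReal_le_ofReal h1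
    _ = 4 := by norm_num

lemma cantor_cover (D : ℕ → ℕ) (g : ℕ → ℕ → ℂ → ℂ)
    (hmaps : ∀ k b, MapsTo (g (k+1) b) (closedBall (0:ℂ) 2) (closedBall (0:ℂ) 2))
    {E : Set ℂ}
    (hcov : ∀ z ∈ E, ∃ w : ℕ → ℂ, w 0 = z ∧
        (∀ j, Complex.abs (w (j+1)) ≤ 2) ∧
        (∀ j, ∃ b < D (j+1), g (j+1) b (w (j+1)) = w j)) :
    ∀ z ∈ E, ∀ k, ∃ b : ℕ → ℕ, (∀ j < k, b j < D (j+1)) ∧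
      z ∈ compG g k b '' closedBall (0:ℂ) 2 := by
  intro z hz k
  obtain ⟨w, hw0, hwa, hwb⟩ := hcov z hz
  have hwball : ∀ j, w j ∈ closedBall (0:ℂ) 2 := by
    intro j
    cases j with
    | zero =>
      obtain ⟨b, _, hb⟩ := hwb 0
      rw [← hb]
      exact hmaps 0 b (by
        simpa [Complex.norm_eq_abs, mem_closedBall, dist_zero_right] using hwa 0)
    | succ j =>
      simpa [Complex.norm_eq_abs, mem_closedBall, dist_zero_right] using hwa j
  have key : ∀ k, ∃ b : ℕ → ℕ, (∀ j < k, b j < D (j+1)) ∧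
      compG g k b (w k) = z := by
    intro k
    induction k with
    | zero => exact ⟨fun _ => 0, by omega, hw0⟩
    | succ k ih =>
      obtain ⟨b, hblt, hbz⟩ := ih
      obtain ⟨b', hb'lt, hb'⟩ := hwb k
      refine ⟨fun j => if j = k then b' else b j, ?_, ?_⟩
      · intro j hj
        by_cases h : j = k
        · simp [h, hb'lt]
        · simpa [h] using hblt j (by omega)
      · show compG g k _ (g (k+1) (if k = k then b' else b k) (w (k+1))) = z
        rw [if_pos rfl, hb']
        rw [compG_congr g k _ b (fun j hj => by simp [Nat.ne_of_lt hj])]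
        exact hbz
  obtain ⟨b, hblt, hbz⟩ := key k
  exact ⟨b, hblt, w k, hwball k, hbz⟩

lemma cantor_meas (D : ℕ → ℕ) (hD : ∀ k, 4 ≤ D (k+1))
    (g : ℕ → ℕ → ℂ → ℂ)
    (hmaps : ∀ k b, MapsTo (g (k+1) b) (closedBall (0:ℂ) 2) (closedBall (0:ℂ) 2))
    (hlip : ∀ k b, LipschitzOnWith ((D (k+1) : NNReal))⁻¹ (g (k+1) b)
      (closedBall (0:ℂ) 2))
    {E : Set ℂ}
    (hcov : ∀ z ∈ E, ∃ w : ℕ → ℂ, w 0 = z ∧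
        (∀ j, Complex.abs (w (j+1)) ≤ 2) ∧
        (∀ j, ∃ b < D (j+1), g (j+1) b (w (j+1)) = w j))
    (d : ℝ) (hd : 1 < d) : μH[d] E = 0 := by
  classical
  have hD0 : ∀ k, ((D (k+1) : ENNReal)) ≠ 0 := by
    intro k; have := hD k; simp; omega
  have hDtop : ∀ k, ((D (k+1) : ENNReal)) ≠ ⊤ := fun k => ENNReal.natCast_ne_top _
  -- the cover
  set t : ∀ k : ℕ, ((j : Fin k) → Fin (D (j+1))) → Set ℂ :=
    fun k i => compG g k (fun j => if h : j < k then (i ⟨j, h⟩ : ℕ) else 0) ''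
      closedBall (0:ℂ) 2 with ht_def
  set r : ℕ → ENNReal :=
    fun k => 4 * ∏ j ∈ Finset.range k, ((D (j+1) : ENNReal))⁻¹ with hr_def
  have hrle : ∀ k, r k ≤ 4 * ((4 : ENNReal)⁻¹) ^ k := by
    intro k
    rw [hr_def]
    apply mul_le_mul_right 
    calc ∏ j ∈ Finset.range k, ((D (j+1) : ENNReal))⁻¹
          ≤ ∏ j ∈ Finset.range k, (4 : ENNReal)⁻¹ := by
            apply Finset.prod_le_prod' 
            intro j _
            apply ENNReal.inv_le_inv.mpr
            exact_mod_cast hD j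
        _ = ((4:ENNReal)⁻¹) ^ k := by rw [Finset.prod_const, Finset.card_range]
  have hrtend : Tendsto r atTop (nhds 0) := by
    have h4 : Tendsto (fun k : ℕ => 4 * ((4 : ENNReal)⁻¹) ^ k) atTop (nhds 0) := by
      have := ENNReal.tendsto_pow_atTop_nhds_zero_of_lt_one
        (by norm_num : (4 : ENNReal)⁻¹ < 1)
      simpa using ENNReal.Tendsto.const_mul this (Or.inr (by norm_num : (4:ENNReal) ≠ ⊤))
    exact tendsto_of_tendsto_of_tendsto_of_le_of_le tendsto_const_nhds h4
      (fun k => by simp) hrle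
  have hdiam : ∀ k i, EMetric.diam (t k i) ≤ r k := by
    intro k i
    have hl := compG_lip g (fun j => ((D j : NNReal))⁻¹) hmaps hlip k
      (fun j => if h : j < k then (i ⟨j, h⟩ : ℕ) else 0)
    calc EMetric.diam (t k i)
        ≤ ((∏ j ∈ Finset.range k, ((D (j+1) : NNReal))⁻¹ : NNReal) : ENNReal) *
          EMetric.diam (closedBall (0:ℂ) 2) := lipOn_ediam hl
      _ ≤ ((∏ j ∈ Finset.range k, ((D (j+1) : NNReal))⁻¹ : NNReal) : ENNReal) * 4 := by
          gcongr
          exact ediam_ball2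
      _ = r k := by
          rw [hr_def, mul_comm]
          congr 1
          rw [ENNReal.coe_finset_prod]
          apply Finset.prod_congr rfl
          intro j _
          have hne : ((D (j+1) : NNReal)) ≠ 0 := by
            have := hD j
            exact_mod_cast Nat.cast_ne_zero.mpr (by omega)
          rw [ENNReal.coe_inv hne, ENNReal.coe_natCast]
  have hcover : ∀ k, E ⊆ ⋃ i, t k i := by
    intro k z hz
    obtain ⟨b, hblt, hmem⟩ := cantor_cover D g hmaps hcov z hz k
    refine mem_iUnion.mpr ⟨fun j => ⟨b j, hblt j j.2⟩, ?_⟩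
    show z ∈ compG g k (fun j => if h : j < k then b j else 0) '' closedBall (0:ℂ) 2
    obtain ⟨x, hx, hxe⟩ := hmem
    refine ⟨x, hx, ?_⟩
    rw [compG_congr g k _ b (fun j hj => dif_pos hj)]
    exact hxe
  -- apply the liminf bound
  have hmain := Measure.hausdorffMeasure_le_liminf_sum d E r hrtend t
    (Eventually.of_forall hdiam) (Eventually.of_forall hcover)
  -- bound the sums
  have hr0 : ∀ k, r k ≠ 0 := by
    intro k
    rw [hr_def]
    apply mul_ne_zero (by norm_num)
    rw [Finset.prod_ne_zero_iff]
    intro j _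
    exact ENNReal.inv_ne_zero.mpr (hDtop j)
  have hrtop : ∀ k, r k ≠ ⊤ := by
    intro k
    exact ne_top_of_le_ne_top
      (ENNReal.mul_ne_top (by norm_num) (ENNReal.pow_ne_top (by simp)))
      (hrle k)
  have hNr : ∀ k, ((∏ j ∈ Finset.range k, D (j+1) : ℕ) : ENNReal) * r k = 4 := by
    intro k
    have hcast : ((∏ j ∈ Finset.range k, D (j+1) : ℕ) : ENNReal)
        = ∏ j ∈ Finset.range k, ((D (j+1) : ENNReal)) := Nat.cast_prod _ _
    show _ * (4 * ∏ j ∈ Finset.range k, ((D (j+1) : ENNReal))⁻¹) = 4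
    rw [hcast, ← mul_assoc, mul_comm _ (4:ENNReal), mul_assoc, ← Finset.prod_mul_distrib]
    have : ∏ j ∈ Finset.range k, ((D (j+1) : ENNReal) * ((D (j+1) : ENNReal))⁻¹) = 1 := by
      apply Finset.prod_eq_one
      intro j _
      exact ENNReal.mul_inv_cancel (hD0 j) (hDtop j)
    rw [this, mul_one]
  have hsum : ∀ k, (∑ i : ((j : Fin k) → Fin (D (j+1))), EMetric.diam (t k i) ^ d)
      ≤ 4 * (r k) ^ (d - 1) := by
    intro k
    have hcard : Fintype.card ((j : Fin k) → Fin (D (j+1)))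
        = ∏ j ∈ Finset.range k, D (j+1) := by
      rw [Fintype.card_pi]
      simp only [Fintype.card_fin]
      exact Fin.prod_univ_eq_prod_range (fun j => D (j+1)) k
    calc (∑ i : ((j : Fin k) → Fin (D (j+1))), EMetric.diam (t k i) ^ d)
        ≤ ∑ _i : ((j : Fin k) → Fin (D (j+1))), (r k) ^ d := by
          apply Finset.sum_le_sum
          intro i _
          exact ENNReal.rpow_le_rpow (hdiam k i) (by linarith)
      _ = (Fintype.card ((j : Fin k) → Fin (D (j+1))) : ℕ) * (r k) ^ d := by
          rw [Finset.sum_const, Finset.card_univ, nsmul_eq_mul]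
      _ = ((∏ j ∈ Finset.range k, D (j+1) : ℕ) : ENNReal) * (r k) ^ d := by
          rw [hcard]
      _ = ((∏ j ∈ Finset.range k, D (j+1) : ℕ) : ENNReal) * (r k * (r k) ^ (d-1)) := by
          congr 1
          have h2 := ENNReal.rpow_add (x := r k) 1 (d-1) (hr0 k) (hrtop k)
          rw [show (1:ℝ) + (d-1) = d by ring, ENNReal.rpow_one] at h2
          exact h2
      _ = 4 * (r k) ^ (d - 1) := by rw [← mul_assoc, hNr k]
  -- now conclude
  set a : ℕ → ENNReal := fun k => 4 * (4 * ((4:ENNReal)⁻¹)^k) ^ (d-1) with ha_def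
  have hsa : ∀ k, (∑ i : ((j : Fin k) → Fin (D (j+1))), EMetric.diam (t k i) ^ d)
      ≤ a k := by
    intro k
    refine (hsum k).trans ?_
    apply mul_le_mul_right
    exact ENNReal.rpow_le_rpow (hrle k) (by linarith)
  have hatend : Tendsto a atTop (nhds 0) := by
    have hq1 : ((4:ENNReal)⁻¹) ^ (d-1) < 1 :=
      ENNReal.rpow_lt_one (by norm_num) (by linarith)
    have heq : ∀ k, a k = (4 * (4:ENNReal) ^ (d-1)) * (((4:ENNReal)⁻¹) ^ (d-1)) ^ k := by
      intro k
      rw [ha_def]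
      show 4 * (4 * ((4:ENNReal)⁻¹)^k) ^ (d-1) = _
      rw [ENNReal.mul_rpow_of_ne_top (by norm_num) (ENNReal.pow_ne_top (by simp)),
        ← ENNReal.rpow_natCast ((4:ENNReal)⁻¹) k, ← ENNReal.rpow_mul,
        mul_comm (k:ℝ) (d-1), ENNReal.rpow_mul, ENNReal.rpow_natCast]
      ring
    have h0 := ENNReal.tendsto_pow_atTop_nhds_zero_of_lt_one hq1
    have h1 := ENNReal.Tendsto.const_mul (a := 4 * (4:ENNReal) ^ (d-1)) h0
      (Or.inr (ENNReal.mul_ne_top (by norm_num)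
        (ENNReal.rpow_ne_top_of_nonneg (by linarith) (by norm_num))))
    simp only [mul_zero] at h1
    refine Tendsto.congr (fun k => (heq k).symm) h1
  have hfin : μH[d] E ≤ 0 := by
    refine hmain.trans ?_
    have h1 : liminf (fun k => ∑ i : ((j : Fin k) → Fin (D (j+1))),
        EMetric.diam (t k i) ^ d) atTop ≤ liminf a atTop :=
      liminf_le_liminf (Eventually.of_forall hsa)
    rw [hatend.liminf_eq] at h1
    exact h1
  exact le_antisymm hfin (by simp)

lemma cantor_dimH (D : ℕ → ℕ) (hD : ∀ k, 4 ≤ D (k+1))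
    (g : ℕ → ℕ → ℂ → ℂ)
    (hmaps : ∀ k b, MapsTo (g (k+1) b) (closedBall (0:ℂ) 2) (closedBall (0:ℂ) 2))
    (hlip : ∀ k b, LipschitzOnWith ((D (k+1) : NNReal))⁻¹ (g (k+1) b)
      (closedBall (0:ℂ) 2))
    {E : Set ℂ}
    (hcov : ∀ z ∈ E, ∃ w : ℕ → ℂ, w 0 = z ∧
        (∀ j, Complex.abs (w (j+1)) ≤ 2) ∧
        (∀ j, ∃ b < D (j+1), g (j+1) b (w (j+1)) = w j)) :
    dimH E ≤ 1 := by
  apply dimH_le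
  intro d' hd'
  by_contra hgt
  push_neg at hgt
  have h1 : (1:ℝ) < (d' : ℝ) := by
    have : (1:NNReal) < d' := by exact_mod_cast hgt
    exact_mod_cast this
  have hmeas := cantor_meas D hD g hmaps hlip hcov (d' : ℝ) h1
  rw [hmeas] at hd'
  exact ENNReal.zero_ne_top hd'

/-- For every m ≥ 0, dim_H(Q_m(E)) ≤ 1; in particular dim_H(E) ≤ 1. -/
theorem stmt_14
    (c : ℕ → ℂ) (msq : ℕ → ℕ)
    (hc : ∀ k, 1 ≤ k → 4 < ‖c k‖)
    (hmsq : ∀ k, 1 ≤ k → 1 ≤ msq k)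
    (hinv : ∀ k, 1 ≤ k → Real.sqrt (‖c k‖) + 1 < (2 : ℝ) ^ 2 ^ msq k)
    (M : ℕ → ℕ) (hM0 : M 0 = 0)
    (hMs : ∀ k, M (k + 1) = M k + (msq (k + 1) + 1))
    (P : ℕ → ℂ → ℂ)
    (hP1 : ∀ k, 1 ≤ k → ∀ z, P (M k) z = z ^ 2 + c k)
    (hP2 : ∀ n, (∀ k, 1 ≤ k → M k ≠ n) → ∀ z, P n z = z ^ 2)
    (Q : ℕ → ℕ → ℂ → ℂ)
    (hQ0 : ∀ n z, Q n n z = z)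
    (hQs : ∀ a n z, a ≤ n → Q a (n + 1) z = P (n + 1) (Q a n z))
    (S : ℕ → Set ℂ)
    (hS : ∀ k, S k = {z : ℂ | ‖Q 0 (M k) z‖ ≤ 2})
    (E : Set ℂ) (hE : E = ⋂ k, ⋂ (_ : 1 ≤ k), S k) :
    (∀ m : ℕ, dimH (Q 0 m '' E) ≤ 1) ∧ dimH E ≤ 1 := by
  simp only [Complex.norm_eq_abs] at hc hinv hS
  -- degree of each block
  set Dk : ℕ → ℕ := fun k => 2 ^ (msq k + 1) with hDk_def
  have hD4 : ∀ k, 4 ≤ Dk (k+1) := by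
    intro k
    have h1 := hmsq (k+1) (by omega)
    calc (4:ℕ) = 2^2 := by norm_num
      _ ≤ 2 ^ (msq (k+1) + 1) := Nat.pow_le_pow_right (by norm_num) (by omega)
  have hc' : ∀ k, 4 < Complex.abs (c (k+1)) := fun k => hc (k+1) (by omega)
  -- the size estimate |c|+2 ≤ 2^D
  have h2D : ∀ k, Complex.abs (c (k+1)) + 2 ≤ 2 ^ (Dk (k+1)) := by
    intro k
    set m := msq (k+1) with hm
    set t : ℝ := (2:ℝ) ^ (2 ^ m) with ht
    have habs : (0:ℝ) ≤ Complex.abs (c (k+1)) := Complex.abs.nonneg _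
    have hsq : Real.sqrt (Complex.abs (c (k+1))) ^ 2 = Complex.abs (c (k+1)) :=
      Real.sq_sqrt habs
    have hiv := hinv (k+1) (by omega)
    have ht4 : (4:ℝ) ≤ t := by
      rw [ht]
      calc (4:ℝ) = 2^2 := by norm_num
        _ ≤ (2:ℝ) ^ (2^m) := by
          apply pow_le_pow_right₀ (by norm_num)
          have := hmsq (k+1) (by omega)
          calc 2 = 2^1 := by norm_num
            _ ≤ 2^m := Nat.pow_le_pow_right (by norm_num) (by omega)
    have hlt : Complex.abs (c (k+1)) < (t - 1)^2 := by
      have h1 : Real.sqrt (Complex.abs (c (k+1))) < t - 1 := by linarith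
      nlinarith [Real.sqrt_nonneg (Complex.abs (c (k+1)))]
    have ht2 : t^2 = (2:ℝ) ^ (Dk (k+1)) := by
      rw [ht, hDk_def]
      rw [← pow_mul]
      congr 1
    rw [← ht2]
    nlinarith
  -- monotonicity of M
  have hMlt : ∀ k, M k < M (k+1) := by intro k; rw [hMs]; omega
  have hMmono : StrictMono M := strictMono_nat_of_lt_succ hMlt
  -- composition property of Q
  have hQcomp : ∀ a b z, a ≤ b → ∀ n, b ≤ n → Q a n z = Q b n (Q a b z) := by
    intro a b z hab n hbn
    induction n, hbn using Nat.le_induction with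
    | base => rw [hQ0]
    | succ n hbn ih =>
      rw [hQs a n z (by omega), ih, hQs b n _ (by omega)]
  -- the squaring steps
  have hQpow : ∀ k i, i ≤ msq (k+1) → ∀ z, Q (M k) (M k + i) z = z ^ (2^i) := by
    intro k i hi z
    induction i with
    | zero => simpa using hQ0 (M k) z
    | succ i ih =>
      have hi' : i ≤ msq (k+1) := by omega
      have hP2' : ∀ w, P (M k + i + 1) w = w ^ 2 := by
        apply hP2
        intro j hj hMj
        rcases le_or_gt j k with hjk | hjk
        · have := hMmono.monotone hjk; omega
        · have h1 : M (k+1) ≤ M j := hMmono.monotone hjk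
          have h2 := hMs k
          omega
      have : M k + (i+1) = (M k + i) + 1 := by omega
      rw [this, hQs (M k) (M k + i) z (by omega), ih hi', hP2', ← pow_mul, pow_succ]
  -- block formula
  have hQblock : ∀ k z, Q (M k) (M (k+1)) z = z ^ (Dk (k+1)) + c (k+1) := by
    intro k z
    have h1 : M (k+1) = (M k + msq (k+1)) + 1 := by rw [hMs]; omega
    rw [h1, hQs (M k) (M k + msq (k+1)) z (by omega),
      hQpow k (msq (k+1)) le_rfl z, ← h1, hP1 (k+1) (by omega), ← pow_mul, ← pow_succ]
  -- membership in E
  have hEmem : ∀ z, z ∈ E ↔ ∀ k, 1 ≤ k → Complex.abs (Q 0 (M k) z) ≤ 2 := by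
    intro z
    rw [hE]
    simp only [mem_iInter, hS, mem_setOf_eq]
  -- orbit relation
  have hworb : ∀ z k, Q 0 (M (k+1)) z = (Q 0 (M k) z) ^ (Dk (k+1)) + c (k+1) := by
    intro z k
    rw [hQcomp 0 (M k) z (by omega) (M (k+1)) (le_of_lt (hMlt k)), hQblock]
  -- apply the Cantor machinery
  have hdimE : dimH E ≤ 1 := by
    apply cantor_dimH Dk hD4 (fun k b => rootBranch (c k) (Dk k) b)
    · intro k b u hu
      rw [mem_closedBall, dist_zero_right, Complex.norm_eq_abs] at hu ⊢
      exact rb_abs (hc' k) (hD4 k) (by exact_mod_cast h2D k) hu b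
    · intro k b
      exact rb_lip (hc' k) (hD4 k) (by exact_mod_cast h2D k) b
    · intro z hz
      refine ⟨fun j => Q 0 (M j) z, ?_, ?_, ?_⟩
      · show Q 0 (M 0) z = z
        rw [hM0, hQ0]
      · intro j
        exact (hEmem z).mp hz (j+1) (by omega)
      · intro j
        have hw : (Q 0 (M j) z) ^ (Dk (j+1)) = Q 0 (M (j+1)) z - c (j+1) := by
          rw [hworb z j]; ring
        exact rb_surj (hc' j) (hD4 j)
          ((hEmem z).mp hz (j+1) (by omega)) hw
  -- E is contained in the ball of radius 2
  have hEball : E ⊆ closedBall (0:ℂ) 2 := by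
    intro z hz
    have h1 := (hEmem z).mp hz 1 (by omega)
    have h0 : M 1 = M 0 + (msq 1 + 1) := hMs 0
    have hw1 : Q 0 (M 1) z = z ^ (Dk 1) + c 1 := by
      have h5 := hworb z 0
      rw [hM0, hQ0] at h5
      exact h5
    rw [hw1] at h1
    have h2 : Complex.abs z ^ (Dk 1) ≤ 2 ^ (Dk 1) := by
      have h3 : Complex.abs (z ^ (Dk 1)) ≤ 2 + Complex.abs (c 1) := by
        calc Complex.abs (z ^ (Dk 1))
            = Complex.abs ((z ^ (Dk 1) + c 1) - c 1) := by ring_nf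
          _ ≤ Complex.abs (z ^ (Dk 1) + c 1) + Complex.abs (c 1) := by
              simpa using Complex.abs.add_le (z ^ (Dk 1) + c 1) (-(c 1))
          _ ≤ 2 + Complex.abs (c 1) := by linarith
      rw [map_pow] at h3
      have h4 := h2D 0
      linarith
    rw [mem_closedBall, dist_zero_right, Complex.norm_eq_abs]
    have hD1 : Dk 1 ≠ 0 := by have h : 4 ≤ Dk 1 := hD4 0; omega
    exact le_of_pow_le_pow_left₀ hD1 (by norm_num) h2
  -- P is a square plus constant everywhere (difference form)
  have hPdiff : ∀ n a b, P n a - P n b = a ^ 2 - b ^ 2 := by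
    intro n a b
    by_cases hex : ∃ j, 1 ≤ j ∧ M j = n
    · obtain ⟨j, hj, rfl⟩ := hex
      rw [hP1 j hj, hP1 j hj]; ring
    · push_neg at hex
      rw [hP2 n hex, hP2 n hex]
  -- Q 0 m is Lipschitz on the ball
  have hQlip : ∀ m, ∃ (K : NNReal) (R : ℝ), 0 ≤ R ∧
      LipschitzOnWith K (Q 0 m) (closedBall (0:ℂ) 2) ∧
      MapsTo (Q 0 m) (closedBall (0:ℂ) 2) (closedBall (0:ℂ) R) := by
    intro m
    induction m with
    | zero =>
      refine ⟨1, 2, by norm_num, ?_, ?_⟩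
      · intro x hx y hy
        rw [hQ0, hQ0]
        simpa using le_refl (edist x y)
      · intro x hx
        rw [hQ0]; exact hx
    | succ m ih =>
      obtain ⟨K, R, hR, hlip, hmaps⟩ := ih
      have hfun : Q 0 (m+1) = (P (m+1)) ∘ (Q 0 m) :=
        funext fun z => hQs 0 m z (by omega)
      set KP : NNReal := (2*R).toNNReal with hKP
      have hlipP : LipschitzOnWith KP (P (m+1)) (closedBall (0:ℂ) R) := by
        apply LipschitzOnWith.of_dist_le_mul
        intro x hx y hy
        rw [mem_closedBall, dist_zero_right, Complex.norm_eq_abs] at hx hy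
        rw [Complex.dist_eq, Complex.dist_eq, hPdiff]
        have : x^2 - y^2 = (x + y) * (x - y) := by ring
        rw [this, norm_mul]
        have hxy : Complex.abs (x + y) ≤ 2*R := by
          calc Complex.abs (x + y) ≤ Complex.abs x + Complex.abs y :=
            Complex.abs.add_le x y
            _ ≤ 2*R := by linarith
        have hco : (KP : ℝ) = 2*R := Real.coe_toNNReal _ (by linarith)
        rw [hco]
        exact mul_le_mul_of_nonneg_right hxy (Complex.abs.nonneg _)
      set R' : ℝ := R^2 + Complex.abs (P (m+1) 0) with hR'
      have hmapsP : MapsTo (P (m+1)) (closedBall (0:ℂ) R) (closedBall (0:ℂ) R') := by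
        intro x hx
        rw [mem_closedBall, dist_zero_right, Complex.norm_eq_abs] at hx ⊢
        have h1 : P (m+1) x - P (m+1) 0 = x^2 := by
          rw [hPdiff]; ring
        calc Complex.abs (P (m+1) x)
            = Complex.abs ((P (m+1) x - P (m+1) 0) + P (m+1) 0) := by ring_nf
          _ ≤ Complex.abs (P (m+1) x - P (m+1) 0) + Complex.abs (P (m+1) 0) :=
              Complex.abs.add_le _ _
          _ ≤ R' := by
              rw [h1, hR', map_pow]
              have : Complex.abs x ^ 2 ≤ R ^ 2 := by nlinarith [Complex.abs.nonneg x]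
              linarith
      refine ⟨KP * K, R', by positivity, ?_, ?_⟩
      · rw [hfun]
        exact hlipP.comp hlip hmaps
      · rw [hfun]
        exact hmapsP.comp hmaps
  constructor
  · intro m
    obtain ⟨K, R, hR, hlip, _⟩ := hQlip m
    exact le_trans ((hlip.mono hEball).dimH_image_le) hdimE
  · exact hdimE
end

section
/- The 1-dimensional Hausdorff measure of the Julia set E = ⋂_{k≥1} S_k satisfies H¹(E) ≤ 4. -/
open Complex Metric Set Filter MeasureTheory
open scoped ENNReal

namespace Stmt15Aux

/-- composition along a branch list: head of the list is the deepest level. -/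
def bc (ψ : ℕ → ℕ → ℂ → ℂ) : List ℕ → ℂ → ℂ
  | [], z => z
  | j :: l, z => bc ψ l (ψ (l.length + 1) j z)

@[simp] lemma bc_nil (ψ : ℕ → ℕ → ℂ → ℂ) (z : ℂ) : bc ψ [] z = z := rfl

@[simp] lemma bc_cons (ψ : ℕ → ℕ → ℂ → ℂ) (j : ℕ) (l : List ℕ) (z : ℂ) :
    bc ψ (j :: l) z = bc ψ l (ψ (l.length + 1) j z) := rfl

/-- family of admissible branch lists of depth k -/
def covFam (Nf : ℕ → ℕ) : ℕ → Finset (List ℕ)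
  | 0 => {[]}
  | k+1 => (Finset.range (Nf (k+1)) ×ˢ covFam Nf k).image fun p => p.1 :: p.2

lemma mem_covFam_succ {Nf : ℕ → ℕ} {k : ℕ} {l : List ℕ} :
    l ∈ covFam Nf (k+1) ↔ ∃ j, j < Nf (k+1) ∧ ∃ l', l' ∈ covFam Nf k ∧ l = j :: l' := by
  simp only [covFam, Finset.mem_image, Finset.mem_product, Finset.mem_range, Prod.exists]
  constructor
  · rintro ⟨a, b, ⟨ha, hb⟩, rfl⟩
    exact ⟨a, ha, b, hb, rfl⟩
  · rintro ⟨j, hj, l', hl', rfl⟩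
    exact ⟨j, l', ⟨hj, hl'⟩, rfl⟩

lemma length_of_mem_covFam {Nf : ℕ → ℕ} : ∀ {k : ℕ} {l : List ℕ},
    l ∈ covFam Nf k → l.length = k := by
  intro k
  induction k with
  | zero => intro l hl; simp [covFam] at hl; simp [hl]
  | succ k ih =>
      intro l hl
      rcases mem_covFam_succ.1 hl with ⟨j, _, l', hl', rfl⟩
      simp [ih hl']

lemma card_covFam (Nf : ℕ → ℕ) : ∀ k, (covFam Nf k).card = ∏ i ∈ Finset.Icc 1 k, Nf i := by
  intro k
  induction k with
  | zero => simp [covFam]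
  | succ k ih =>
      have hinj : Function.Injective (fun p : ℕ × List ℕ => p.1 :: p.2) := by
        rintro ⟨a, b⟩ ⟨d, e⟩ h
        simp only [List.cons.injEq] at h
        exact Prod.ext h.1 h.2
      rw [covFam, Finset.card_image_of_injective _ hinj, Finset.card_product,
        Finset.card_range, Finset.prod_Icc_succ_top (Nat.le_add_left 1 k), ih]
      ring

lemma branch_pow (N : ℕ) (hN : (N:ℂ) ≠ 0) (j : ℕ) (a b : ℂ) (ha : a ≠ 0) (hb : b ≠ 0) :
    (Complex.exp (2 * ↑Real.pi * Complex.I / (N:ℂ)) ^ j * Complex.exp (Complex.log a / (N:ℂ)) *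
      Complex.exp (Complex.log b / (N:ℂ))) ^ N = a * b := by
  have hcanc : ∀ x : ℂ, (N:ℂ) * (x / (N:ℂ)) = x := fun x => by field_simp
  rw [mul_pow, mul_pow, ← pow_mul, mul_comm j N, pow_mul,
    ← Complex.exp_nat_mul (2 * ↑Real.pi * Complex.I / (N:ℂ)) N, hcanc,
    Complex.exp_two_pi_mul_I, one_pow, one_mul,
    ← Complex.exp_nat_mul (Complex.log a / (N:ℂ)) N, hcanc,
    ← Complex.exp_nat_mul (Complex.log b / (N:ℂ)) N, hcanc,
    Complex.exp_log ha, Complex.exp_log hb]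

lemma branch_hasDerivAt (N : ℕ) (hN : (N:ℂ) ≠ 0) (A cc : ℂ) (hcc : cc ≠ 0) (u : ℂ)
    (hu : (u - cc) / (-cc) ∈ Complex.slitPlane) (hune : u - cc ≠ 0) :
    HasDerivAt (fun v => A * Complex.exp (Complex.log ((v - cc) / (-cc)) / (N:ℂ)))
      (A * Complex.exp (Complex.log ((u - cc) / (-cc)) / (N:ℂ)) / ((u - cc) * (N:ℂ))) u := by
  have h0 : HasDerivAt (fun v : ℂ => (v - cc) / (-cc)) (1 / (-cc)) u :=
    ((hasDerivAt_id u).sub_const cc).div_const (-cc)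
  have h1 := (h0.clog hu).div_const (N:ℂ)
  have h2 := h1.cexp.const_mul A
  convert h2 using 1
  have hncc : -cc ≠ 0 := neg_ne_zero.2 hcc
  · rfl
  · rfl
  · field_simp

end Stmt15Aux

open Stmt15Aux

/-- The 1-dimensional Hausdorff measure of E = ⋂_{k≥1} S_k
satisfies H¹(E) ≤ 4. -/
theorem stmt_15
    (c : ℕ → ℂ) (msq : ℕ → ℕ)
    (hc : ∀ k, 1 ≤ k → 4 < ‖c k‖)
    (hmsq : ∀ k, 1 ≤ k → 1 ≤ msq k)
    (hinv : ∀ k, 1 ≤ k → Real.sqrt (‖c k‖) + 1 < (2 : ℝ) ^ 2 ^ msq k)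
    (M : ℕ → ℕ) (hM0 : M 0 = 0)
    (hMs : ∀ k, M (k + 1) = M k + (msq (k + 1) + 1))
    (P : ℕ → ℂ → ℂ)
    (hP1 : ∀ k, 1 ≤ k → ∀ z, P (M k) z = z ^ 2 + c k)
    (hP2 : ∀ n, (∀ k, 1 ≤ k → M k ≠ n) → ∀ z, P n z = z ^ 2)
    (Q : ℕ → ℕ → ℂ → ℂ)
    (hQ0 : ∀ n z, Q n n z = z)
    (hQs : ∀ a n z, a ≤ n → Q a (n + 1) z = P (n + 1) (Q a n z))
    (S : ℕ → Set ℂ)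
    (hS : ∀ k, S k = {z : ℂ | ‖Q 0 (M k) z‖ ≤ 2})
    (E : Set ℂ) (hE : E = ⋂ k, ⋂ (_ : 1 ≤ k), S k) :
    μH[1] E ≤ 4 := by
  classical
  -- ## dynamical preliminaries
  have hMlt : ∀ k, M k < M (k + 1) := fun k => by rw [hMs k]; omega
  have hMmono : StrictMono M := strictMono_nat_of_lt_succ hMlt
  have hPmid : ∀ k n, M k < n → n < M (k + 1) → ∀ z : ℂ, P n z = z ^ 2 := by
    intro k n h1 h2 z
    refine hP2 n (fun j _ => ?_) z
    rcases le_or_gt j k with hjk | hjk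
    · have := hMmono.monotone hjk; omega
    · have := hMmono.monotone (show k + 1 ≤ j from hjk); omega
  have hQcomp : ∀ a b n, a ≤ b → b ≤ n → ∀ z, Q a n z = Q b n (Q a b z) := by
    intro a b n hab hbn
    induction n, hbn using Nat.le_induction with
    | base => intro z; rw [hQ0]
    | succ n hbn ih =>
        intro z
        rw [hQs a n z (hab.trans hbn), hQs b n _ hbn, ih]
  have hQpow : ∀ k i, i ≤ msq (k + 1) → ∀ z : ℂ, Q (M k) (M k + i) z = z ^ 2 ^ i := by
    intro k i
    induction i with
    | zero => intro _ z; simpa using hQ0 (M k) z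
    | succ i ih =>
        intro hi z
        have e1 : M k + (i + 1) = (M k + i) + 1 := rfl
        rw [e1, hQs _ _ _ (Nat.le_add_right _ _), ih (Nat.le_of_succ_le hi),
          hPmid k (M k + i + 1) (by omega) (by rw [hMs]; omega), ← pow_mul, ← pow_succ]
  have hQf : ∀ k (z : ℂ), Q (M k) (M (k + 1)) z = z ^ 2 ^ (msq (k + 1) + 1) + c (k + 1) := by
    intro k z
    have h1 : M (k + 1) = (M k + msq (k + 1)) + 1 := by rw [hMs]; omega
    rw [h1, hQs _ _ _ (Nat.le_add_right _ _), hQpow k (msq (k + 1)) le_rfl, ← h1,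
      hP1 (k + 1) (Nat.le_add_left 1 k), ← pow_mul, ← pow_succ]
  have hstep : ∀ k (z : ℂ),
      Q 0 (M (k + 1)) z = (Q 0 (M k) z) ^ 2 ^ (msq (k + 1) + 1) + c (k + 1) := by
    intro k z
    rw [hQcomp 0 (M k) (M (k + 1)) (Nat.zero_le _) (hMlt k).le, hQf]
  have hmem : ∀ z ∈ E, ∀ k, 1 ≤ k → ‖Q 0 (M k) z‖ ≤ 2 := by
    intro z hz k hk
    rw [hE] at hz
    have h1 := mem_iInter.1 hz k
    have h2 := mem_iInter.1 h1 hk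
    rw [hS k] at h2
    exact h2
  -- ## the degrees
  set Nf : ℕ → ℕ := fun i => 2 ^ (msq i + 1) with hNfdef
  have hNfne : ∀ i, Nf i ≠ 0 := fun i => by positivity
  have hNf0 : ∀ i, (Nf i : ℂ) ≠ 0 := fun i => Nat.cast_ne_zero.2 (hNfne i)
  have hNf4 : ∀ i, 1 ≤ i → 4 ≤ Nf i := by
    intro i hi
    have := hmsq i hi
    calc (4:ℕ) = 2 ^ 2 := rfl
    _ ≤ 2 ^ (msq i + 1) := Nat.pow_le_pow_right (by norm_num) (by omega)
  have hcn : ∀ i, 1 ≤ i → 4 < ‖c i‖ := fun i hi => hc i hi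
  have hc0 : ∀ i, 1 ≤ i → c i ≠ 0 := fun i hi => by
    intro h; have := hcn i hi; rw [h] at this; norm_num at this
  have hkey : ∀ i, 1 ≤ i → ‖c i‖ + 2 < (2:ℝ) ^ Nf i := by
    intro i hi
    have h1 := hinv i hi
    have hs : Real.sqrt (‖c i‖) ^ 2 = ‖c i‖ :=
      Real.sq_sqrt (by positivity)
    have hs2 : 2 < Real.sqrt (‖c i‖) := by
      nlinarith [Real.sqrt_nonneg (‖c i‖), hc i hi]
    have h2 : (Real.sqrt (‖c i‖) + 1) ^ 2 < ((2:ℝ) ^ 2 ^ msq i) ^ 2 := by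
      have hp : (0:ℝ) ≤ Real.sqrt (‖c i‖) + 1 := by positivity
      nlinarith [h1]
    have h3 : ((2:ℝ) ^ 2 ^ msq i) ^ 2 = (2:ℝ) ^ Nf i := by
      rw [← pow_mul, hNfdef]
      norm_num [pow_succ]
    have h4 : ‖c i‖ + 2 < (Real.sqrt (‖c i‖) + 1) ^ 2 := by
      nlinarith [hs2, hs]
    have h5 : ‖c i‖ + 2 < (2:ℝ) ^ Nf i := by rw [← h3]; linarith
    exact h5
  -- ## geometric facts about points of the closed ball
  have hlow : ∀ i, 1 ≤ i → ∀ u : ℂ, ‖u‖ ≤ 2 → 2 ≤ ‖u - c i‖ := by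
    intro i hi u hu
    have h1 : ‖c i‖ - ‖u‖ ≤ ‖u - c i‖ := by
      rw [norm_sub_rev]; exact norm_sub_norm_le _ _
    linarith [hcn i hi]
  have hne : ∀ i, 1 ≤ i → ∀ u : ℂ, ‖u‖ ≤ 2 → u - c i ≠ 0 := by
    intro i hi u hu h
    have := hlow i hi u hu
    rw [h] at this; norm_num at this
  have hslit : ∀ i, 1 ≤ i → ∀ u : ℂ, ‖u‖ ≤ 2 → (u - c i) / (-(c i)) ∈ Complex.slitPlane := by
    intro i hi u hu
    have hcne : c i ≠ 0 := hc0 i hi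
    have h1 : (u - c i) / (-(c i)) = 1 - u / c i := by
      rw [div_neg, ← neg_div, neg_sub, sub_div, div_self hcne]
    have h2 : (u / c i).re ≤ ‖u / c i‖ := Complex.re_le_norm _
    have h3 : ‖u / c i‖ ≤ 2 / 4 := by
      rw [norm_div]
      exact div_le_div₀ (by norm_num) hu (by norm_num) (le_of_lt (hcn i hi))
    rw [h1, Complex.mem_slitPlane_iff]
    left
    have h4 : (1 - u / c i).re = 1 - (u / c i).re := by simp [Complex.sub_re]
    rw [h4]
    linarith
  -- ## the inverse branch functions
  set ψ : ℕ → ℕ → ℂ → ℂ := fun i j u =>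
    Complex.exp (2 * ↑Real.pi * Complex.I / (Nf i : ℂ)) ^ j *
      Complex.exp (Complex.log (-(c i)) / (Nf i : ℂ)) *
      Complex.exp (Complex.log ((u - c i) / (-(c i))) / (Nf i : ℂ)) with hψdef
  have hpow : ∀ i, 1 ≤ i → ∀ j, ∀ u : ℂ, ‖u‖ ≤ 2 → (ψ i j u) ^ Nf i = u - c i := by
    intro i hi j u hu
    have hncc : -(c i) ≠ 0 := neg_ne_zero.2 (hc0 i hi)
    have hbne : (u - c i) / (-(c i)) ≠ 0 := div_ne_zero (hne i hi u hu) hncc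
    have h1 := branch_pow (Nf i) (hNf0 i) j (-(c i)) ((u - c i) / (-(c i))) hncc hbne
    rw [hψdef]
    simp only
    rw [h1]
    exact mul_div_cancel₀ _ hncc
  have habsψ : ∀ i, 1 ≤ i → ∀ j, ∀ u : ℂ, ‖u‖ ≤ 2 → ‖ψ i j u‖ ≤ 2 := by
    intro i hi j u hu
    have h1 : ‖ψ i j u‖ ^ Nf i = ‖u - c i‖ := by
      rw [← norm_pow, hpow i hi j u hu]
    have h2 : ‖u - c i‖ ≤ (2:ℝ) ^ Nf i := by
      have := norm_sub_le u (c i)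
      have := hkey i hi
      linarith
    refine le_of_pow_le_pow_left₀ (hNfne i) (by norm_num) ?_
    rw [h1]; exact h2
  have hroot : ∀ i, 1 ≤ i → ∀ u : ℂ, ‖u‖ ≤ 2 → ∀ w : ℂ,
      w ^ Nf i = u - c i → ∃ j, j < Nf i ∧ w = ψ i j u := by
    intro i hi u hu w hw
    haveI : NeZero (Nf i) := ⟨hNfne i⟩
    have hv : (ψ i 0 u) ^ Nf i = u - c i := hpow i hi 0 u hu
    have hvne : ψ i 0 u ≠ 0 := by
      intro h
      rw [h, zero_pow (hNfne i)] at hv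
      exact hne i hi u hu hv.symm
    have hdiv : (w / ψ i 0 u) ^ Nf i = 1 := by
      rw [div_pow, hw, hv, div_self (hne i hi u hu)]
    obtain ⟨j, hj, hζ⟩ :=
      (Complex.isPrimitiveRoot_exp (Nf i) (hNfne i)).eq_pow_of_pow_eq_one hdiv
    refine ⟨j, hj, ?_⟩
    have hwv : w = Complex.exp (2 * ↑Real.pi * Complex.I / (Nf i : ℂ)) ^ j * ψ i 0 u := by
      rw [hζ, div_mul_cancel₀ _ hvne]
    rw [hwv, hψdef]
    simp only
    rw [pow_zero, one_mul]
    ring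
  have hlip : ∀ i, 1 ≤ i → ∀ j, ∀ u ∈ closedBall (0:ℂ) 2, ∀ v ∈ closedBall (0:ℂ) 2,
      ‖ψ i j u - ψ i j v‖ ≤ ((Nf i : ℝ))⁻¹ * ‖u - v‖ := by
    intro i hi j u hu v hv
    have hNpos : (0:ℝ) < (Nf i : ℝ) := by
      have := hNfne i; positivity
    have hder : ∀ x ∈ closedBall (0:ℂ) 2,
        HasDerivWithinAt (ψ i j) (ψ i j x / ((x - c i) * (Nf i : ℂ))) (closedBall (0:ℂ) 2) x := by
      intro x hx
      have hx2 : ‖x‖ ≤ 2 := mem_closedBall_zero_iff.1 hx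
      have h1 := branch_hasDerivAt (Nf i) (hNf0 i)
        (Complex.exp (2 * ↑Real.pi * Complex.I / (Nf i : ℂ)) ^ j *
          Complex.exp (Complex.log (-(c i)) / (Nf i : ℂ)))
        (c i) (hc0 i hi) x (hslit i hi x hx2) (hne i hi x hx2)
      exact h1.hasDerivWithinAt
    have hbound : ∀ x ∈ closedBall (0:ℂ) 2,
        ‖ψ i j x / ((x - c i) * (Nf i : ℂ))‖ ≤ (Nf i : ℝ)⁻¹ := by
      intro x hx
      have hx2 : ‖x‖ ≤ 2 := mem_closedBall_zero_iff.1 hx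
      have h1 : ‖ψ i j x‖ ≤ 2 := habsψ i hi j x hx2
      have h2 : 2 ≤ ‖x - c i‖ := hlow i hi x hx2
      have hd : ‖(x - c i) * ((Nf i : ℕ) : ℂ)‖ = ‖x - c i‖ * (Nf i : ℝ) := by
        rw [norm_mul, Complex.norm_natCast]
      rw [norm_div, hd]
      calc ‖ψ i j x‖ / (‖x - c i‖ * (Nf i : ℝ))
          ≤ 2 / (2 * (Nf i : ℝ)) := by
            apply div_le_div₀ (by norm_num) h1 (by positivity)
            exact mul_le_mul_of_nonneg_right h2 hNpos.le
        _ = (Nf i : ℝ)⁻¹ := by field_simp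
    have := (convex_closedBall (0:ℂ) 2).norm_image_sub_le_of_norm_hasDerivWithin_le
      hder hbound hv hu
    exact this
  -- ## branch expansion of points of E
  have hbranch : ∀ z ∈ E, ∀ k, ∃ l ∈ covFam Nf k, z = bc ψ l (Q 0 (M k) z) := by
    intro z hz k
    induction k with
    | zero =>
        refine ⟨[], by simp [covFam], ?_⟩
        rw [hM0, hQ0]
        rfl
    | succ k ih =>
        obtain ⟨l, hl, hzl⟩ := ih
        have hlen := length_of_mem_covFam hl
        have hu : ‖Q 0 (M (k + 1)) z‖ ≤ 2 := hmem z hz (k + 1) (by omega)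
        have heq : (Q 0 (M k) z) ^ Nf (k + 1) = Q 0 (M (k + 1)) z - c (k + 1) := by
          rw [hstep k z]
          simp only [hNfdef]
          ring
        obtain ⟨j, hj, hw⟩ := hroot (k + 1) (by omega) (Q 0 (M (k + 1)) z) hu (Q 0 (M k) z) heq
        refine ⟨j :: l, mem_covFam_succ.2 ⟨j, hj, l, hl, rfl⟩, ?_⟩
        rw [bc_cons, hlen, ← hw, ← hzl]
  -- ## the pieces: images of the closed ball under composed branches
  have hbcmain : ∀ k, ∀ l ∈ covFam Nf k,
      (∀ u ∈ closedBall (0:ℂ) 2, bc ψ l u ∈ closedBall (0:ℂ) 2) ∧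
      (∀ u ∈ closedBall (0:ℂ) 2, ∀ v ∈ closedBall (0:ℂ) 2,
        ‖bc ψ l u - bc ψ l v‖ ≤ (∏ i ∈ Finset.Icc 1 k, ((Nf i : ℝ))⁻¹) * ‖u - v‖) := by
    intro k
    induction k with
    | zero =>
        intro l hl
        have hl0 : l = [] := by simpa [covFam] using hl
        subst hl0
        refine ⟨fun u hu => by simpa using hu, fun u hu v hv => by simp⟩
    | succ k ih =>
        intro l hl
        rcases mem_covFam_succ.1 hl with ⟨j, hj, l', hl', rfl⟩
        have hlen := length_of_mem_covFam hl'
        obtain ⟨ihmap, ihlip⟩ := ih l' hl'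
        have hmap1 : ∀ u ∈ closedBall (0:ℂ) 2, ψ (k+1) j u ∈ closedBall (0:ℂ) 2 := by
          intro u hu
          rw [mem_closedBall_zero_iff]
          exact habsψ (k+1) (by omega) j u (mem_closedBall_zero_iff.1 hu)
        have hprodnn : (0:ℝ) ≤ ∏ i ∈ Finset.Icc 1 k, ((Nf i : ℝ))⁻¹ :=
          Finset.prod_nonneg fun i _ => by positivity
        constructor
        · intro u hu
          rw [bc_cons, hlen]
          exact ihmap _ (hmap1 u hu)
        · intro u hu v hv
          rw [bc_cons, bc_cons, hlen]
          calc ‖bc ψ l' (ψ (k+1) j u) - bc ψ l' (ψ (k+1) j v)‖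
              ≤ (∏ i ∈ Finset.Icc 1 k, ((Nf i : ℝ))⁻¹) * ‖ψ (k+1) j u - ψ (k+1) j v‖ :=
                ihlip _ (hmap1 u hu) _ (hmap1 v hv)
            _ ≤ (∏ i ∈ Finset.Icc 1 k, ((Nf i : ℝ))⁻¹) * (((Nf (k+1) : ℝ))⁻¹ * ‖u - v‖) :=
                mul_le_mul_of_nonneg_left (hlip (k+1) (by omega) j u hu v hv) hprodnn
            _ = (∏ i ∈ Finset.Icc 1 (k+1), ((Nf i : ℝ))⁻¹) * ‖u - v‖ := by
                rw [Finset.prod_Icc_succ_top (Nat.le_add_left 1 k)]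
                ring
  -- diameter bound of a piece
  have hdiam : ∀ k, ∀ l ∈ covFam Nf k,
      EMetric.diam (bc ψ l '' closedBall (0:ℂ) 2) ≤
        ENNReal.ofReal ((∏ i ∈ Finset.Icc 1 k, ((Nf i : ℝ))⁻¹) * 4) := by
    intro k l hl
    apply EMetric.diam_le
    rintro x ⟨u, hu, rfl⟩ y ⟨v, hv, rfl⟩
    rw [edist_dist]
    apply ENNReal.ofReal_le_ofReal
    rw [dist_eq_norm]
    have h1 := (hbcmain k l hl).2 u hu v hv
    have h2 : ‖u - v‖ ≤ 4 := by
      have hu2 : ‖u‖ ≤ 2 := mem_closedBall_zero_iff.1 hu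
      have hv2 : ‖v‖ ≤ 2 := mem_closedBall_zero_iff.1 hv
      have := norm_sub_le u v
      linarith
    have hprodnn : (0:ℝ) ≤ ∏ i ∈ Finset.Icc 1 k, ((Nf i : ℝ))⁻¹ :=
      Finset.prod_nonneg fun i _ => by positivity
    calc ‖bc ψ l u - bc ψ l v‖
        ≤ (∏ i ∈ Finset.Icc 1 k, ((Nf i : ℝ))⁻¹) * ‖u - v‖ := h1
      _ ≤ (∏ i ∈ Finset.Icc 1 k, ((Nf i : ℝ))⁻¹) * 4 := mul_le_mul_of_nonneg_left h2 hprodnn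
  -- products shrink geometrically
  have hprodle : ∀ k, (∏ i ∈ Finset.Icc 1 k, ((Nf i : ℝ))⁻¹) ≤ ((4:ℝ)⁻¹) ^ k := by
    intro k
    calc (∏ i ∈ Finset.Icc 1 k, ((Nf i : ℝ))⁻¹)
        ≤ ∏ i ∈ Finset.Icc 1 k, (4:ℝ)⁻¹ := by
          apply Finset.prod_le_prod (fun i _ => by positivity)
          intro i hi
          rw [Finset.mem_Icc] at hi
          have h4 : (4:ℝ) ≤ (Nf i : ℝ) := by exact_mod_cast hNf4 i hi.1
          exact inv_anti₀ (by norm_num) h4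
      _ = ((4:ℝ)⁻¹) ^ k := by
          rw [Finset.prod_const, Nat.card_Icc]
          norm_num
  -- ## the Hausdorff measure estimate
  rw [MeasureTheory.Measure.hausdorffMeasure_apply]
  refine iSup_le fun r => iSup_le fun hr => ?_
  -- choose the depth k
  obtain ⟨k, hk1, hkr⟩ : ∃ k, 1 ≤ k ∧
      ENNReal.ofReal ((∏ i ∈ Finset.Icc 1 k, ((Nf i : ℝ))⁻¹) * 4) ≤ r := by
    rcases eq_or_ne r ⊤ with hrt | hrt
    · exact ⟨1, le_rfl, by rw [hrt]; exact le_top⟩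
    · have hrp : 0 < r.toReal := ENNReal.toReal_pos hr.ne' hrt
      obtain ⟨k0, hk0⟩ := exists_pow_lt_of_lt_one (show (0:ℝ) < r.toReal / 4 by positivity)
        (show (4:ℝ)⁻¹ < 1 by norm_num)
      refine ⟨max k0 1, le_max_right _ _, ?_⟩
      have h1 : (∏ i ∈ Finset.Icc 1 (max k0 1), ((Nf i : ℝ))⁻¹) ≤ ((4:ℝ)⁻¹) ^ (max k0 1) :=
        hprodle _
      have h2 : ((4:ℝ)⁻¹) ^ (max k0 1) ≤ ((4:ℝ)⁻¹) ^ k0 :=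
        pow_le_pow_of_le_one (by norm_num) (by norm_num) (le_max_left _ _)
      have h3 : (∏ i ∈ Finset.Icc 1 (max k0 1), ((Nf i : ℝ))⁻¹) * 4 ≤ r.toReal := by
        nlinarith
      calc ENNReal.ofReal ((∏ i ∈ Finset.Icc 1 (max k0 1), ((Nf i : ℝ))⁻¹) * 4)
          ≤ ENNReal.ofReal r.toReal := ENNReal.ofReal_le_ofReal h3
        _ = r := ENNReal.ofReal_toReal hrt
  -- the cover
  set t : ℕ → Set ℂ := fun n =>
    if Denumerable.ofNat (List ℕ) n ∈ covFam Nf k then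
      bc ψ (Denumerable.ofNat (List ℕ) n) '' closedBall (0:ℂ) 2
    else ∅ with htdef
  have ht_eval : ∀ l ∈ covFam Nf k, t (Encodable.encode l) = bc ψ l '' closedBall (0:ℂ) 2 := by
    intro l hl
    simp only [htdef, Denumerable.ofNat_encode, if_pos hl]
  have ht_not : ∀ n, Denumerable.ofNat (List ℕ) n ∉ covFam Nf k → t n = ∅ := by
    intro n hn
    simp only [htdef, if_neg hn]
  have hcov : E ⊆ ⋃ n, t n := by
    intro z hz
    obtain ⟨l, hl, hzl⟩ := hbranch z hz k
    refine mem_iUnion.2 ⟨Encodable.encode l, ?_⟩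
    rw [ht_eval l hl]
    exact ⟨Q 0 (M k) z, mem_closedBall_zero_iff.2 (hmem z hz k hk1), hzl.symm⟩
  have hsmall : ∀ n, EMetric.diam (t n) ≤ r := by
    intro n
    by_cases hmemb : Denumerable.ofNat (List ℕ) n ∈ covFam Nf k
    · have : t n = bc ψ (Denumerable.ofNat (List ℕ) n) '' closedBall (0:ℂ) 2 := by
        simp only [htdef, if_pos hmemb]
      rw [this]
      exact le_trans (hdiam k _ hmemb) hkr
    · rw [ht_not n hmemb]
      exact EMetric.diam_empty.le.trans zero_le
  refine le_trans (iInf_le_of_le t (iInf_le_of_le hcov (iInf_le_of_le hsmall le_rfl))) ?_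
  -- sum the diameters
  have hterm : ∀ n, (⨆ _ : (t n).Nonempty, EMetric.diam (t n) ^ (1:ℝ)) ≤ EMetric.diam (t n) := by
    intro n
    refine iSup_le fun _ => ?_
    rw [ENNReal.rpow_one]
  have hsum1 : ∑' n, (⨆ _ : (t n).Nonempty, EMetric.diam (t n) ^ (1:ℝ)) ≤
      ∑' n, EMetric.diam (t n) := Summable.tsum_le_tsum hterm ENNReal.summable ENNReal.summable
  refine le_trans hsum1 ?_
  set s : Finset ℕ := (covFam Nf k).image Encodable.encode with hsdef
  have hzero : ∀ n ∉ s, EMetric.diam (t n) = 0 := by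
    intro n hn
    have hnm : Denumerable.ofNat (List ℕ) n ∉ covFam Nf k := by
      intro hmem'
      apply hn
      rw [hsdef]
      exact Finset.mem_image.2 ⟨_, hmem', Denumerable.encode_ofNat n⟩
    rw [ht_not n hnm]
    exact EMetric.diam_empty
  rw [tsum_eq_sum hzero]
  have hcard : s.card = ∏ i ∈ Finset.Icc 1 k, Nf i := by
    rw [hsdef, Finset.card_image_of_injective _ Encodable.encode_injective, card_covFam]
  have hbnd : ∀ n ∈ s, EMetric.diam (t n) ≤
      ENNReal.ofReal ((∏ i ∈ Finset.Icc 1 k, ((Nf i : ℝ))⁻¹) * 4) := by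
    intro n hn
    rcases Finset.mem_image.1 hn with ⟨l, hl, rfl⟩
    rw [ht_eval l hl]
    exact hdiam k l hl
  calc ∑ n ∈ s, EMetric.diam (t n)
      ≤ s.card • ENNReal.ofReal ((∏ i ∈ Finset.Icc 1 k, ((Nf i : ℝ))⁻¹) * 4) :=
        Finset.sum_le_card_nsmul s _ _ hbnd
    _ = ((∏ i ∈ Finset.Icc 1 k, Nf i : ℕ) : ENNReal) *
        ENNReal.ofReal ((∏ i ∈ Finset.Icc 1 k, ((Nf i : ℝ))⁻¹) * 4) := by
        rw [hcard, nsmul_eq_mul]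
    _ = ENNReal.ofReal (((∏ i ∈ Finset.Icc 1 k, Nf i) : ℝ) *
        ((∏ i ∈ Finset.Icc 1 k, ((Nf i : ℝ))⁻¹) * 4)) := by
        rw [← ENNReal.ofReal_natCast, ← ENNReal.ofReal_mul (by positivity), Nat.cast_prod]
    _ = ENNReal.ofReal 4 := by
        congr 1
        have hP : (∏ i ∈ Finset.Icc 1 k, ((Nf i : ℝ))) ≠ 0 :=
          Finset.prod_ne_zero_iff.2 fun i _ => by exact_mod_cast hNfne i
        rw [Finset.prod_inv_distrib, ← mul_assoc, mul_inv_cancel₀ hP, one_mul]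
    _ ≤ 4 := by
        rw [ENNReal.ofReal_ofNat]
end
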